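/- arXiv:1207.2414 — 2 statements merged into one kernel-verified Lean document; each statement's English description precedes it below -/
import Mathlib

section
/- Suppose W ∈ C³ satisfies condition (a'), that W''(0) < 0 if W'(0) = 0, and that W'(t) < 0 for all t ∈ (0, μ). Then the only classical solutions u ∈ C²(ℝⁿ) of the entire equation Δu = W'(u) on ℝⁿ that satisfy 0 ≤ u(x) ≤ μ for all x ∈ ℝⁿ are the constant solutions u ≡ 0 and u ≡ μ. -/
open Metric Set Filter Pointwise

noncomputable section

/-- The Laplacian of `u : ℝⁿ → ℝ`: the sum of the second partial derivatives. -/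
def lap {n : ℕ} (u : EuclideanSpace ℝ (Fin n) → ℝ) (x : EuclideanSpace ℝ (Fin n)) : ℝ :=
  ∑ i : Fin n, fderiv ℝ (fun y => fderiv ℝ u y (EuclideanSpace.single i 1)) x
    (EuclideanSpace.single i 1)

/-- Condition (a'): `W` is `C²`, `μ > 0`, `W μ = 0`, `W > 0` on `[0, μ)`, `W ≥ 0` everywhere,
and either `W(-t) ≥ W(t)` on `[0, μ]` or `W' < 0` on `(-∞, 0)`. -/
def CondA' (W : ℝ → ℝ) (μ : ℝ) : Prop :=
  ContDiff ℝ 2 W ∧ 0 < μ ∧ W μ = 0 ∧ (∀ t ∈ Set.Ico (0:ℝ) μ, 0 < W t) ∧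
    (∀ t : ℝ, 0 ≤ W t) ∧
    ((∀ t ∈ Set.Icc (0:ℝ) μ, W t ≤ W (-t)) ∨ (∀ t < (0:ℝ), deriv W t < 0))

/-- `U` is the heteroclinic profile: `U'' = W'(U)` on `(0, ∞)`, `U 0 = 0`, `U → μ` at `∞`. -/
def IsHetero (W : ℝ → ℝ) (μ : ℝ) (U : ℝ → ℝ) : Prop :=
  ContDiffOn ℝ 2 U (Set.Ici 0) ∧ U 0 = 0 ∧
    (∀ s > (0:ℝ), deriv (deriv U) s = deriv W (U s)) ∧
    Filter.Tendsto U Filter.atTop (nhds μ)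

/-- `Ω` has boundary of class `C²`, via local `C²` defining functions. -/
def HasC2Boundary {n : ℕ} (Ω : Set (EuclideanSpace ℝ (Fin n))) : Prop :=
  ∀ x ∈ frontier Ω, ∃ (V : Set (EuclideanSpace ℝ (Fin n))) (f : EuclideanSpace ℝ (Fin n) → ℝ),
    IsOpen V ∧ x ∈ V ∧ ContDiffOn ℝ 2 f V ∧ (∀ y ∈ V, fderiv ℝ f y ≠ 0) ∧
    Ω ∩ V = {y ∈ V | f y < 0} ∧ frontier Ω ∩ V = {y ∈ V | f y = 0}

namespace Stmt9Aux

variable {n : ℕ}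

local notation "E" => EuclideanSpace ℝ (Fin n)

lemma cd1_deriv {g : ℝ → ℝ} (hg : ContDiff ℝ 2 g) : ContDiff ℝ 1 (deriv g) := by
  have := (contDiff_succ_iff_deriv (n := 1)).mp (by norm_num at hg ⊢; exact hg)
  exact this.2.2

lemma line_hasDerivAt (x v : E) (t : ℝ) :
    HasDerivAt (fun t : ℝ => x + t • v) v t := by
  simpa using ((hasDerivAt_id t).smul_const v).const_add x

lemma slice_hasDerivAt {v : E → ℝ} (hv : Differentiable ℝ v) (x w : E) (t : ℝ) :
    HasDerivAt (fun t : ℝ => v (x + t • w)) (fderiv ℝ v (x + t • w) w) t :=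
  ((hv (x + t • w)).hasFDerivAt).comp_hasDerivAt t (line_hasDerivAt x w t)

lemma slice_deriv {v : E → ℝ} (hv : ContDiff ℝ 2 v) (x w : E) :
    deriv (deriv (fun t : ℝ => v (x + t • w))) 0 = fderiv ℝ (fun y => fderiv ℝ v y w) x w := by
  have hdiff : Differentiable ℝ v := hv.differentiable (by norm_num)
  have h1 : deriv (fun t : ℝ => v (x + t • w)) = fun t : ℝ => fderiv ℝ v (x + t • w) w := by
    funext t; exact (slice_hasDerivAt hdiff x w t).deriv
  rw [h1]
  have hF : DifferentiableAt ℝ (fun y => fderiv ℝ v y w) x :=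
    (((hv.fderiv_right (m := 1) (by norm_num)).differentiable (by norm_num)) x).clm_apply
      (differentiableAt_const w)
  have h0 : x + (0:ℝ) • w = x := by simp
  have h2 : HasDerivAt (fun t : ℝ => fderiv ℝ v (x + t • w) w)
      (fderiv ℝ (fun y => fderiv ℝ v y w) x w) 0 := by
    have hF' : HasFDerivAt (fun y => fderiv ℝ v y w)
        (fderiv ℝ (fun y => fderiv ℝ v y w) x) (x + (0:ℝ) • w) := by
      rw [h0]; exact hF.hasFDerivAt
    exact hF'.comp_hasDerivAt 0 (line_hasDerivAt x w 0)
  exact h2.deriv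

lemma lap_eq_sum_slice {v : E → ℝ} (hv : ContDiff ℝ 2 v) (x : E) :
    lap v x = ∑ i : Fin n,
      deriv (deriv (fun t : ℝ => v (x + t • (EuclideanSpace.single i 1 : E)))) 0 := by
  unfold lap
  exact Finset.sum_congr rfl fun i _ => (slice_deriv hv x _).symm

lemma second_deriv_nonneg_of_isLocalMin {g : ℝ → ℝ} (hg : ContDiff ℝ 2 g)
    (h : IsLocalMin g 0) : 0 ≤ deriv (deriv g) 0 := by
  by_contra hneg
  push_neg at hneg
  have h1 : deriv g 0 = 0 := h.deriv_eq_zero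
  have hd : HasDerivAt (deriv g) (deriv (deriv g) 0) 0 :=
    (((cd1_deriv hg).differentiable (by norm_num)) 0).hasDerivAt
  have hs := hasDerivAt_iff_tendsto_slope.mp hd
  have hs' : Tendsto (slope (deriv g) 0) (nhdsWithin 0 (Ioi 0)) (nhds (deriv (deriv g) 0)) :=
    hs.mono_left (nhdsWithin_mono 0 (fun t ht => by
      simp only [mem_compl_iff, mem_singleton_iff]; exact ne_of_gt ht))
  have hev : ∀ᶠ t in nhdsWithin 0 (Ioi 0), slope (deriv g) 0 t < 0 :=
    hs'.eventually_lt_const hneg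
  rw [eventually_iff] at hev
  obtain ⟨ε, hε, hIoc⟩ := mem_nhdsGT_iff_exists_Ioc_subset.mp hev
  have hεpos : (0:ℝ) < ε := hε
  have hderivneg : ∀ t ∈ Ioo (0:ℝ) ε, deriv g t < 0 := by
    intro t ht
    have hsl : slope (deriv g) 0 t < 0 := hIoc ⟨ht.1, le_of_lt ht.2⟩
    have heq : slope (deriv g) 0 t = t⁻¹ * deriv g t := by simp [slope, h1]
    rw [heq] at hsl
    have htinv : 0 < t⁻¹ := inv_pos.mpr ht.1
    nlinarith
  have hanti : StrictAntiOn g (Icc 0 ε) := by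
    apply strictAntiOn_of_deriv_neg (convex_Icc 0 ε)
    · exact (hg.continuous).continuousOn
    · intro t ht
      rw [interior_Icc] at ht
      exact hderivneg t ht
  obtain ⟨ε2, hε2, hmin⟩ := Metric.eventually_nhds_iff.mp h
  set t0 := min ε ε2 / 2 with ht0def
  have ht0pos : 0 < t0 := by positivity
  have ht0ε : t0 ≤ ε := by
    have : min ε ε2 ≤ ε := min_le_left _ _
    linarith
  have hlt : g t0 < g 0 := by
    have := hanti (show (0:ℝ) ∈ Icc 0 ε from ⟨le_refl _, le_of_lt hεpos⟩)
      (show t0 ∈ Icc 0 ε from ⟨le_of_lt ht0pos, ht0ε⟩) ht0pos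
    exact this
  have hge : g 0 ≤ g t0 := by
    apply hmin
    have : t0 < ε2 := by
      have : min ε ε2 ≤ ε2 := min_le_right _ _
      linarith
    simpa [Real.dist_eq, abs_of_pos ht0pos] using this
  linarith

lemma line_contDiff (x v : E) : ContDiff ℝ 2 (fun t : ℝ => x + t • v) :=
  contDiff_const.add (contDiff_id.smul contDiff_const)

lemma isLocalMin_slice {v : E → ℝ} (hv : Continuous v) {x : E} (h : IsLocalMin v x) (w : E) :
    IsLocalMin (fun t : ℝ => v (x + t • w)) 0 := by
  have hc : Tendsto (fun t : ℝ => x + t • w) (nhds 0) (nhds x) := by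
    have := ((line_contDiff (n := n) x w).continuous).tendsto 0
    simpa using this
  exact Filter.Eventually.mono (hc.eventually h) (fun t ht => by simpa using ht)

lemma lap_nonneg_of_isLocalMin {v : E → ℝ} (hv : ContDiff ℝ 2 v) {x : E}
    (h : IsLocalMin v x) : 0 ≤ lap v x := by
  rw [lap_eq_sum_slice hv x]
  apply Finset.sum_nonneg
  intro i _
  exact second_deriv_nonneg_of_isLocalMin (hv.comp (line_contDiff x _))
    (isLocalMin_slice hv.continuous h _)

lemma deriv2_add_const_mul {g h : ℝ → ℝ} (hg : ContDiff ℝ 2 g) (hh : ContDiff ℝ 2 h) (c : ℝ) :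
    deriv (deriv (fun t => g t + c * h t)) 0 = deriv (deriv g) 0 + c * deriv (deriv h) 0 := by
  have hgd : Differentiable ℝ g := hg.differentiable (by norm_num)
  have hhd : Differentiable ℝ h := hh.differentiable (by norm_num)
  have h1 : deriv (fun t => g t + c * h t) = fun t => deriv g t + c * deriv h t := by
    funext t
    rw [deriv_fun_add (hgd t) ((hhd t).const_mul c), deriv_const_mul c (hhd t)]
  rw [h1]
  have hgd' : Differentiable ℝ (deriv g) := (cd1_deriv hg).differentiable (by norm_num)
  have hhd' : Differentiable ℝ (deriv h) := (cd1_deriv hh).differentiable (by norm_num)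
  rw [deriv_fun_add (hgd' 0) ((hhd' 0).const_mul c), deriv_const_mul c (hhd' 0)]

lemma lap_add_const_mul {v w : E → ℝ} (hv : ContDiff ℝ 2 v) (hw : ContDiff ℝ 2 w) (c : ℝ)
    (x : E) : lap (fun y => v y + c * w y) x = lap v x + c * lap w x := by
  rw [lap_eq_sum_slice (hv.add (contDiff_const.mul hw)) x, lap_eq_sum_slice hv x,
    lap_eq_sum_slice hw x, Finset.mul_sum, ← Finset.sum_add_distrib]
  apply Finset.sum_congr rfl
  intro i _
  exact deriv2_add_const_mul (hv.comp (line_contDiff x _)) (hw.comp (line_contDiff x _)) c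

lemma coord_line (x : E) (i j : Fin n) (t : ℝ) :
    (x + t • (EuclideanSpace.single i 1 : E)) j = x j + (if j = i then t else 0) := by
  simp [PiLp.add_apply, PiLp.smul_apply, EuclideanSpace.single_apply, mul_ite]

lemma deriv_const_mul_shift {f : ℝ → ℝ} (hf : Differentiable ℝ f) (C s t0 : ℝ) :
    deriv (fun t => C * f (s + t)) t0 = C * deriv f (s + t0) := by
  have h1 : HasDerivAt (fun t : ℝ => f (s + t)) (deriv f (s + t0)) t0 := by
    have := HasDerivAt.comp (h := fun t : ℝ => s + t) (x := t0)
      ((hf (s + t0)).hasDerivAt) ((hasDerivAt_id t0).const_add s)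
    simpa [Function.comp_def] using this
  simpa using (h1.const_mul C).deriv

lemma deriv2_const_mul_shift {f : ℝ → ℝ} (hf : ContDiff ℝ 2 f) (C s : ℝ) :
    deriv (deriv (fun t => C * f (s + t))) 0 = C * deriv (deriv f) s := by
  have hfd : Differentiable ℝ f := hf.differentiable (by norm_num)
  have h1 : deriv (fun t => C * f (s + t)) = fun t => C * deriv f (s + t) := by
    funext t; exact deriv_const_mul_shift hfd C s t
  rw [h1]
  have := deriv_const_mul_shift ((cd1_deriv hf).differentiable (by norm_num)) C s 0
  simpa using this

lemma slice_prod (f : ℝ → ℝ) (c x : E) (i : Fin n) :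
    (fun t : ℝ => ∏ j, f ((x + t • (EuclideanSpace.single i 1 : E)) j - c j))
      = fun t : ℝ => (∏ j ∈ Finset.univ.erase i, f (x j - c j)) * f ((x i - c i) + t) := by
  funext t
  rw [← Finset.mul_prod_erase Finset.univ _ (Finset.mem_univ i), mul_comm]
  congr 1
  · apply Finset.prod_congr rfl
    intro j hj
    have hne : j ≠ i := (Finset.mem_erase.mp hj).1
    rw [coord_line]
    simp [hne]
  · rw [coord_line]
    simp [add_sub_assoc, sub_add_eq_add_sub]

lemma barrier_prod_contDiff {f : ℝ → ℝ} (hf : ContDiff ℝ 2 f) (c : E) :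
    ContDiff ℝ 2 (fun y : E => ∏ j, f (y j - c j)) := by
  apply contDiff_prod
  intro j _
  apply hf.comp
  have : (fun y : E => y j - c j) = fun y : E => (EuclideanSpace.proj (𝕜 := ℝ) j) y - c j := by
    funext y; simp
  rw [this]
  exact (EuclideanSpace.proj (𝕜 := ℝ) j).contDiff.sub contDiff_const

lemma lap_prod {f : ℝ → ℝ} (hf : ContDiff ℝ 2 f) (c x : E) :
    lap (fun y : E => ∏ j, f (y j - c j)) x
      = ∑ i : Fin n, (∏ j ∈ Finset.univ.erase i, f (x j - c j)) * deriv (deriv f) (x i - c i) := by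
  rw [lap_eq_sum_slice (barrier_prod_contDiff hf c) x]
  apply Finset.sum_congr rfl
  intro i _
  rw [show (fun t : ℝ => (fun y : E => ∏ j, f (y j - c j)) (x + t • (EuclideanSpace.single i 1 : E)))
    = fun t : ℝ => (∏ j ∈ Finset.univ.erase i, f (x j - c j)) * f ((x i - c i) + t) from slice_prod f c x i]
  exact deriv2_const_mul_shift hf _ _

lemma deriv2_sq_shift (s D : ℝ) :
    deriv (deriv (fun t : ℝ => (s + t)^2 + D)) 0 = 2 := by
  have h1 : deriv (fun t : ℝ => (s + t)^2 + D) = fun t : ℝ => 2 * (s + t) := by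
    funext t
    have : HasDerivAt (fun t : ℝ => (s + t)^2 + D) (2 * (s + t)) t := by
      have := (((hasDerivAt_id t).const_add s).pow 2).add_const D
      simpa [mul_comm] using this
    exact this.deriv
  rw [h1]
  have : HasDerivAt (fun t : ℝ => 2 * (s + t)) 2 (0:ℝ) := by
    simpa using ((hasDerivAt_id (0:ℝ)).const_add s).const_mul 2
  exact this.deriv

lemma qform_contDiff (c : E) : ContDiff ℝ 2 (fun y : E => ∑ j, (y j - c j)^2) := by
  have hcoord : ∀ j : Fin n, ContDiff ℝ 2 (fun y : E => (y j - c j)^2) := by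
    intro j
    have : (fun y : E => (y j - c j)^2)
        = fun y : E => ((EuclideanSpace.proj (𝕜 := ℝ) j) y - c j)^2 := by
      funext y; simp
    rw [this]
    exact ((EuclideanSpace.proj (𝕜 := ℝ) j).contDiff.sub contDiff_const).pow 2
  exact ContDiff.sum (fun j _ => hcoord j)

lemma lap_qform (c x : E) :
    lap (fun y : E => ∑ j, (y j - c j)^2) x = 2 * n := by
  rw [lap_eq_sum_slice (qform_contDiff c) x]
  have hterm : ∀ i : Fin n,
      deriv (deriv (fun t : ℝ => ∑ j, ((x + t • (EuclideanSpace.single i 1 : E)) j - c j)^2)) 0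
        = 2 := by
    intro i
    have hsl : (fun t : ℝ => ∑ j, ((x + t • (EuclideanSpace.single i 1 : E)) j - c j)^2)
        = fun t : ℝ => ((x i - c i) + t)^2 + ∑ j ∈ Finset.univ.erase i, (x j - c j)^2 := by
      funext t
      rw [← Finset.add_sum_erase Finset.univ _ (Finset.mem_univ i)]
      congr 1
      · rw [coord_line]; simp; ring
      · apply Finset.sum_congr rfl
        intro j hj
        have hne : j ≠ i := (Finset.mem_erase.mp hj).1
        rw [coord_line]; simp [hne]
    rw [hsl]
    exact deriv2_sq_shift _ _
  rw [Finset.sum_congr rfl (fun i _ => hterm i)]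
  simp [Finset.sum_const, mul_comm]

lemma contDiff_cosk (k : ℝ) : ContDiff ℝ 2 (fun t : ℝ => Real.cos (k * t)) :=
  (Real.contDiff_cos.of_le le_top).comp (contDiff_const.mul contDiff_id)

lemma deriv2_cosk (k s : ℝ) :
    deriv (deriv (fun t : ℝ => Real.cos (k * t))) s = -(k^2) * Real.cos (k * s) := by
  have h1 : deriv (fun t : ℝ => Real.cos (k * t)) = fun t : ℝ => -Real.sin (k * t) * k := by
    funext t
    have : HasDerivAt (fun t : ℝ => Real.cos (k * t)) (-Real.sin (k * t) * k) t := by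
      have := ((hasDerivAt_id t).const_mul k).cos
      simpa using this
    exact this.deriv
  rw [h1]
  have h2 : HasDerivAt (fun t : ℝ => -Real.sin (k * t) * k)
      (-(Real.cos (k * s) * k) * k) s := by
    have := (((hasDerivAt_id s).const_mul k).sin).neg.mul_const k
    simpa using this
  rw [h2.deriv]; ring

lemma contDiff_gauss (α : ℝ) : ContDiff ℝ 2 (fun t : ℝ => Real.exp (-(α * t^2))) :=
  (Real.contDiff_exp.of_le le_top).comp ((contDiff_const.mul (contDiff_id.pow 2)).neg)

lemma hasDerivAt_neg_alpha_sq (α t : ℝ) :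
    HasDerivAt (fun t : ℝ => -(α * t^2)) (-(2*α*t)) t := by
  have h0 := ((hasDerivAt_pow 2 t).const_mul α).fun_neg
  refine h0.congr_deriv ?_
  norm_num; ring

lemma deriv2_gauss (α s : ℝ) :
    deriv (deriv (fun t : ℝ => Real.exp (-(α * t^2)))) s
      = (4*α^2*s^2 - 2*α) * Real.exp (-(α * s^2)) := by
  have h1 : deriv (fun t : ℝ => Real.exp (-(α * t^2)))
      = fun t : ℝ => (-(2*α*t)) * Real.exp (-(α * t^2)) := by
    funext t
    have := (hasDerivAt_neg_alpha_sq α t).exp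
    rw [this.deriv]; ring
  rw [h1]
  have hA : HasDerivAt (fun t : ℝ => -(2*α*t)) (-(2*α)) s := by
    have := ((hasDerivAt_id s).const_mul (2*α)).fun_neg
    simpa using this
  have h2 := hA.fun_mul (hasDerivAt_neg_alpha_sq α s).exp
  rw [h2.deriv]; ring

lemma lap_cos (k : ℝ) (c x : E) :
    lap (fun y : E => ∏ j, Real.cos (k * (y j - c j))) x
      = -(k^2) * n * ∏ j, Real.cos (k * (x j - c j)) := by
  rw [lap_prod (contDiff_cosk k) c x]
  have h : ∀ i ∈ Finset.univ, (∏ j ∈ Finset.univ.erase i, Real.cos (k * (x j - c j)))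
      * deriv (deriv (fun t : ℝ => Real.cos (k * t))) (x i - c i)
      = -(k^2) * ∏ j, Real.cos (k * (x j - c j)) := by
    intro i _
    rw [deriv2_cosk,
      ← Finset.mul_prod_erase Finset.univ (fun j => Real.cos (k * (x j - c j))) (Finset.mem_univ i)]
    ring
  rw [Finset.sum_congr rfl h, Finset.sum_const, Finset.card_univ, Fintype.card_fin,
    nsmul_eq_mul]
  ring

lemma gauss_prod_eq (α : ℝ) (c x : E) :
    (∏ j, Real.exp (-(α * (x j - c j)^2))) = Real.exp (-(α * ∑ j, (x j - c j)^2)) := by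
  rw [← Real.exp_sum]
  congr 1
  rw [Finset.mul_sum]
  simp

lemma lap_gauss (α : ℝ) (c x : E) :
    lap (fun y : E => ∏ j, Real.exp (-(α * (y j - c j)^2))) x
      = (4*α^2 * (∑ j, (x j - c j)^2) - 2*α*n) * Real.exp (-(α * ∑ j, (x j - c j)^2)) := by
  rw [lap_prod (contDiff_gauss α) c x]
  have h : ∀ i ∈ Finset.univ, (∏ j ∈ Finset.univ.erase i, Real.exp (-(α * (x j - c j)^2)))
      * deriv (deriv (fun t : ℝ => Real.exp (-(α * t^2)))) (x i - c i)
      = (4*α^2*(x i - c i)^2 - 2*α) * ∏ j, Real.exp (-(α * (x j - c j)^2)) := by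
    intro i _
    rw [deriv2_gauss,
      ← Finset.mul_prod_erase Finset.univ (fun j => Real.exp (-(α * (x j - c j)^2)))
        (Finset.mem_univ i)]
    ring
  rw [Finset.sum_congr rfl h, ← Finset.sum_mul, gauss_prod_eq]
  congr 1
  rw [Finset.sum_sub_distrib, Finset.sum_const, Finset.card_univ, Fintype.card_fin,
    nsmul_eq_mul, ← Finset.mul_sum]
  ring

lemma norm_sq_eq (c x : E) : (∑ j, (x j - c j)^2) = (dist x c)^2 := by
  rw [dist_eq_norm, EuclideanSpace.norm_eq, Real.sq_sqrt]
  · apply Finset.sum_congr rfl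
    intro j _
    rw [PiLp.sub_apply, Real.norm_eq_abs, sq_abs]
  · apply Finset.sum_nonneg
    intro j _
    positivity

lemma prop1 (hn : 1 ≤ n) {W : ℝ → ℝ} {u : E → ℝ}
    (hu : ContDiff ℝ 2 u) (heq : ∀ x, lap u x = deriv W (u x))
    {m0 θ c : ℝ} (hc : 0 < c) (hm0 : ∀ x, m0 ≤ u x)
    (hWc : ∀ t, m0 ≤ t → t ≤ θ → deriv W t ≤ -c) :
    ∀ x, θ ≤ u x := by
  intro x0
  by_contra hlt
  push_neg at hlt
  have hnpos : (0:ℝ) < n := by exact_mod_cast hn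
  set η : ℝ := c / (4 * n) with hη
  have hηpos : 0 < η := by positivity
  have hθm : 0 < θ - m0 := by have := hm0 x0; linarith
  set R2 : ℝ := (θ - m0) / η + 1 with hR2
  have hR2pos : 0 < R2 := by positivity
  set R := Real.sqrt R2 with hR
  set q : E → ℝ := fun y => ∑ j, (y j - x0 j)^2 with hqdef
  set p : E → ℝ := fun y => u y + η * q y with hpdef
  have hqc : ContDiff ℝ 2 q := qform_contDiff x0
  have hpc : ContDiff ℝ 2 p := hu.add (contDiff_const.mul hqc)
  have hK : IsCompact (closedBall x0 R) := isCompact_closedBall x0 R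
  have hx0K : x0 ∈ closedBall x0 R := mem_closedBall_self (Real.sqrt_nonneg _)
  obtain ⟨xs, hxsK, hxsmin⟩ := hK.exists_isMinOn ⟨x0, hx0K⟩ hpc.continuous.continuousOn
  have hq_eq : ∀ y, q y = (dist y x0)^2 := fun y => norm_sq_eq x0 y
  have hqx0 : q x0 = 0 := by
    rw [hq_eq]; simp
  have hpx0 : p x0 = u x0 := by rw [hpdef]; simp [hqx0]
  have hmin_le : p xs ≤ u x0 := by
    have := hxsmin hx0K
    simpa [hpx0] using this
  have hqnn : 0 ≤ q xs := by rw [hq_eq]; positivity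
  have hpxs : u xs ≤ p xs := by
    rw [hpdef]; simp only []; nlinarith
  rcases lt_or_eq_of_le (mem_closedBall.mp hxsK) with hdlt | hdeq
  · rcases lt_or_ge (u xs) θ with hu1 | hu2
    · have hloc : IsLocalMin p xs :=
        hxsmin.isLocalMin (closedBall_mem_nhds_of_mem hdlt)
      have h0 : 0 ≤ lap p xs := lap_nonneg_of_isLocalMin hpc hloc
      have hlapp : lap p xs = deriv W (u xs) + η * (2*n) := by
        rw [hpdef, lap_add_const_mul hu hqc η xs, heq xs, lap_qform]
      have hWle := hWc (u xs) (hm0 xs) (le_of_lt hu1)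
      have hval : η * (2*(n:ℝ)) = c/2 := by
        rw [hη]; field_simp; ring
      rw [hlapp, hval] at h0
      linarith
    · linarith
  · have hqxs : q xs = R2 := by
      rw [hq_eq, hdeq, hR]
      exact Real.sq_sqrt (le_of_lt hR2pos)
    have hps : u xs + η * R2 ≤ u x0 := by
      rw [hpdef] at hmin_le
      simp only [hqxs] at hmin_le
      exact hmin_le
    have hηR2 : η * R2 = (θ - m0) + η := by
      rw [hR2]; field_simp
    have := hm0 xs
    rw [hηR2] at hps
    linarith

set_option maxHeartbeats 1000000 in
lemma prop2 (hn : 1 ≤ n) {W : ℝ → ℝ} {u : E → ℝ} {μ : ℝ}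
    (hu : ContDiff ℝ 2 u) (heq : ∀ x, lap u x = deriv W (u x))
    (hbd : ∀ x, 0 ≤ u x ∧ u x ≤ μ)
    (hW0 : ∀ t, 0 ≤ t → t ≤ μ → deriv W t ≤ 0)
    {x2 : E} (hx2 : 0 < u x2) : ∀ x, 0 < u x := by
  by_contra hzc
  push_neg at hzc
  obtain ⟨z0, hz0⟩ := hzc
  have hz0' : u z0 = 0 := le_antisymm hz0 (hbd z0).1
  set Z : Set E := u ⁻¹' {0} with hZ
  have hZc : IsClosed Z := isClosed_singleton.preimage hu.continuous
  have hZne : Z.Nonempty := ⟨z0, hz0'⟩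
  obtain ⟨z, hzZ, hzd⟩ := hZc.exists_infDist_eq_dist hZne x2
  have huz : u z = 0 := hzZ
  set d := dist x2 z with hd
  have hdpos : 0 < d := by
    rcases eq_or_lt_of_le (dist_nonneg (x := x2) (y := z)) with h | h
    · exfalso
      have : x2 = z := dist_eq_zero.mp h.symm
      rw [this, huz] at hx2; linarith
    · exact h
  have hball : ∀ x, dist x x2 < d → 0 < u x := by
    intro x hx
    rcases lt_or_eq_of_le (hbd x).1 with h | h
    · exact h
    · exfalso
      have hxZ : x ∈ Z := by
        simp only [hZ, Set.mem_preimage, Set.mem_singleton_iff]; exact h.symm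
      have h2 : infDist x2 Z ≤ dist x2 x := infDist_le_dist_of_mem hxZ
      rw [hzd] at h2
      rw [dist_comm] at hx
      linarith
  -- inner sphere minimum
  have hi0 : (⟨0, hn⟩ : Fin n) = ⟨0, hn⟩ := rfl
  set pt : E := x2 + (d/2) • (EuclideanSpace.single (⟨0, hn⟩ : Fin n) 1) with hptdef
  have hpt : pt ∈ sphere x2 (d/2) := by
    rw [mem_sphere, hptdef]
    have h1 : dist (x2 + (d/2) • (EuclideanSpace.single (⟨0, hn⟩ : Fin n) 1 : E)) x2
        = ‖(d/2) • (EuclideanSpace.single (⟨0, hn⟩ : Fin n) 1 : E)‖ := by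
      rw [dist_eq_norm]; congr 1; abel
    rw [h1, norm_smul, EuclideanSpace.norm_single]
    simp [abs_of_pos hdpos]
  obtain ⟨xm, hxmS, hmins⟩ := (isCompact_sphere x2 (d/2)).exists_isMinOn ⟨pt, hpt⟩
    hu.continuous.continuousOn
  set ε := u xm with hε
  have hεpos : 0 < ε := hball xm (by rw [mem_sphere] at hxmS; rw [hxmS]; linarith)
  -- gaussian barrier
  set α := (2*(n:ℝ)+1)/d^2 with hα
  have hnpos : (0:ℝ) < n := by exact_mod_cast hn
  have hαpos : 0 < α := by positivity
  set G : E → ℝ := fun y => Real.exp (-(α * ∑ j, (y j - x2 j)^2)) with hGdef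
  have hGeq : (fun y : E => ∏ j, Real.exp (-(α * (y j - x2 j)^2))) = G :=
    funext (fun y => gauss_prod_eq α x2 y)
  have hGc : ContDiff ℝ 2 G := by
    rw [← hGeq]; exact barrier_prod_contDiff (contDiff_gauss α) x2
  have hGpos : ∀ y, 0 < G y := fun y => Real.exp_pos _
  have hGle1 : ∀ y, G y ≤ 1 := by
    intro y
    show Real.exp (-(α * ∑ j, (y j - x2 j)^2)) ≤ 1
    rw [← Real.exp_zero]
    apply Real.exp_le_exp.mpr
    have : 0 ≤ ∑ j, (y j - x2 j)^2 := by positivity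
    nlinarith
  have hGdist : ∀ y, G y = Real.exp (-(α * (dist y x2)^2)) := by
    intro y
    show Real.exp (-(α * ∑ j, (y j - x2 j)^2)) = Real.exp (-(α * (dist y x2)^2))
    rw [norm_sq_eq x2 y]
  set β := Real.exp (-(α * d^2)) with hβ
  have hβpos : 0 < β := Real.exp_pos _
  -- annulus
  set A : Set E := closedBall x2 d ∩ {x | d/2 ≤ dist x x2} with hA
  have hAc : IsCompact A := (isCompact_closedBall x2 d).inter_right
    (isClosed_le continuous_const (continuous_id.dist continuous_const))
  have hzA : z ∈ A := by
    have hdz : dist z x2 = d := by rw [dist_comm]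
    constructor
    · rw [mem_closedBall, hdz]
    · show d/2 ≤ dist z x2
      rw [hdz]; linarith
  set w : E → ℝ := fun y => u y + (-ε) * G y with hw
  have hwc : ContDiff ℝ 2 w := hu.add (contDiff_const.mul hGc)
  obtain ⟨xa, hxaA, hxamin⟩ := hAc.exists_isMinOn ⟨z, hzA⟩ hwc.continuous.continuousOn
  have hwa : -(ε*β) ≤ w xa := by
    obtain ⟨hxa1, hxa2⟩ := hxaA
    rw [mem_closedBall] at hxa1
    simp only [Set.mem_setOf_eq] at hxa2
    rcases eq_or_lt_of_le hxa2 with hinner | hxa2'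
    · -- on inner sphere
      have hxaS : xa ∈ sphere x2 (d/2) := by rw [mem_sphere]; exact hinner.symm
      have h1 : ε ≤ u xa := hmins hxaS
      have h2 : ε * G xa ≤ ε * 1 := by
        apply mul_le_mul_of_nonneg_left (hGle1 xa) (le_of_lt hεpos)
      have h3 : 0 < ε*β := by positivity
      simp only [hw]
      nlinarith
    rcases eq_or_lt_of_le hxa1 with houter | hxa1'
    · -- on outer sphere
      have hGxa : G xa = β := by rw [hGdist, houter, hβ]
      simp only [hw, hGxa]
      have := (hbd xa).1
      nlinarith
    · -- interior: contradiction
      exfalso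
      set O : Set E := {x | d/2 < dist x x2} ∩ {x | dist x x2 < d} with hO
      have hOopen : IsOpen O := (isOpen_lt continuous_const
        (continuous_id.dist continuous_const)).inter
        (isOpen_lt (continuous_id.dist continuous_const) continuous_const)
      have hxaO : xa ∈ O := ⟨hxa2', hxa1'⟩
      have hOA : O ⊆ A := by
        intro x hx
        obtain ⟨ha, hb⟩ := hx
        simp only [Set.mem_setOf_eq] at ha hb
        exact ⟨mem_closedBall.mpr (le_of_lt hb), by simp only [Set.mem_setOf_eq]; linarith⟩
      have hloc : IsLocalMin w xa :=
        hxamin.isLocalMin (Filter.mem_of_superset (hOopen.mem_nhds hxaO) hOA)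
      have h0 : 0 ≤ lap w xa := lap_nonneg_of_isLocalMin hwc hloc
      have hlapG : lap G xa = (4*α^2 * ((dist xa x2)^2) - 2*α*n)
          * Real.exp (-(α * (dist xa x2)^2)) := by
        rw [← hGeq, lap_gauss, norm_sq_eq]
      have hQ : (d/2)^2 ≤ (dist xa x2)^2 := by
        have h4 : 0 ≤ d/2 := by linarith
        exact pow_le_pow_left₀ h4 (le_of_lt hxa2') 2
      have hcoef : α ≤ 4*α^2 * ((dist xa x2)^2) - 2*α*n := by
        have hαd : α * d^2 = 2*(n:ℝ)+1 := by
          rw [hα]; field_simp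
        have h5 : 4*α^2*((d/2)^2) ≤ 4*α^2*((dist xa x2)^2) :=
          mul_le_mul_of_nonneg_left hQ (by positivity)
        have h6 : 4*α^2*((d/2)^2) = α*(α*d^2) := by ring
        rw [hαd] at h6
        nlinarith
      have hlapw : lap w xa = deriv W (u xa) + (-ε) * lap G xa := by
        rw [hw, lap_add_const_mul hu hGc (-ε) xa, heq xa]
      have hWle : deriv W (u xa) ≤ 0 := hW0 (u xa) (hbd xa).1 (hbd xa).2
      have hexp : 0 < Real.exp (-(α * (dist xa x2)^2)) := Real.exp_pos _
      rw [hlapw, hlapG] at h0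
      have h7 : α * Real.exp (-(α * (dist xa x2)^2))
          ≤ (4*α^2 * ((dist xa x2)^2) - 2*α*n) * Real.exp (-(α * (dist xa x2)^2)) :=
        mul_le_mul_of_nonneg_right hcoef (le_of_lt hexp)
      have h9 := mul_le_mul_of_nonneg_left h7 (le_of_lt hεpos)
      have h8 : 0 < ε * (α * Real.exp (-(α * (dist xa x2)^2))) := by positivity
      rw [neg_mul] at h0
      linarith
  have hAbound : ∀ x ∈ A, ε * (G x - β) ≤ u x := by
    intro x hx
    have h1 : u xa + (-ε) * G xa ≤ u x + (-ε) * G x := hxamin hx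
    have h2 : -(ε*β) ≤ u xa + (-ε) * G xa := hwa
    have h3 : ε * (G x - β) = ε * G x - ε * β := by ring
    rw [h3]
    rw [neg_mul] at h1 h2
    linarith
  -- Hopf
  set v : E := d⁻¹ • (x2 - z) with hv
  have hdist : ∀ t : ℝ, 0 ≤ t → t ≤ d → dist (z + t • v) x2 = d - t := by
    intro t ht0 htd
    have hvec : z + t • v - x2 = (1 - t * d⁻¹) • (z - x2) := by
      rw [hv]; module
    rw [dist_eq_norm, hvec, norm_smul, Real.norm_eq_abs]
    have hzx2 : ‖z - x2‖ = d := by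
      rw [← dist_eq_norm, dist_comm, ← hd]
    rw [hzx2, abs_of_nonneg]
    · field_simp
    · have : t * d⁻¹ ≤ 1 := by
        rw [← div_eq_mul_inv, div_le_one hdpos]; exact htd
      linarith
  set F : ℝ → ℝ := fun t => u (z + t • v) - ε * (Real.exp (-(α * (d - t)^2)) - β) with hF
  have hF0 : F 0 = 0 := by
    simp only [hF, zero_smul, add_zero, huz, hβ]
    ring
  have hFnn : ∀ t, 0 < t → t ≤ d/2 → 0 ≤ F t := by
    intro t ht0 htd
    have hmem : z + t • v ∈ A := by
      have hd1 : dist (z + t • v) x2 = d - t := hdist t (le_of_lt ht0) (by linarith)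
      constructor
      · rw [mem_closedBall, hd1]; linarith
      · simp only [Set.mem_setOf_eq]; rw [hd1]; linarith
    have h1 := hAbound _ hmem
    have hGval : G (z + t • v) = Real.exp (-(α * (d - t)^2)) := by
      rw [hGdist, hdist t (le_of_lt ht0) (by linarith)]
    rw [hGval] at h1
    simp only [hF]
    linarith
  -- derivative of F at 0
  have hfz : fderiv ℝ u z = 0 := by
    apply IsLocalMin.fderiv_eq_zero
    apply Filter.Eventually.of_forall
    intro y
    rw [huz]; exact (hbd y).1
  have hu1 : HasDerivAt (fun t : ℝ => u (z + t • v)) 0 0 := by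
    have h := slice_hasDerivAt (hu.differentiable (by norm_num)) z v 0
    simp only [zero_smul, add_zero, hfz] at h
    simpa using h
  have hψ : HasDerivAt (fun t : ℝ => Real.exp (-(α * (d - t)^2)))
      (Real.exp (-(α * d^2)) * (2*α*d)) 0 := by
    have hinner : HasDerivAt (fun t : ℝ => -(α * (d - t)^2)) (2*α*d) 0 := by
      have h1 : HasDerivAt (fun t : ℝ => d - t) (-1) 0 := (hasDerivAt_id 0).const_sub d
      have h2 := (h1.pow 2).const_mul α
      have h3 := h2.fun_neg
      refine h3.congr_deriv ?_
      norm_num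
      ring
    have := hinner.exp
    convert this using 2 <;> norm_num
  have hFd : HasDerivAt F (-(ε * (Real.exp (-(α * d^2)) * (2*α*d)))) 0 := by
    have := hu1.fun_sub ((hψ.sub_const β).const_mul ε)
    refine this.congr_deriv ?_
    ring
  have hL : -(ε * (Real.exp (-(α * d^2)) * (2*α*d))) < 0 := by
    have h1 : 0 < ε * (Real.exp (-(α * d^2)) * (2*α*d)) := by positivity
    linarith
  have hslope : Tendsto (slope F 0) (nhdsWithin 0 (Ioi 0))
      (nhds (-(ε * (Real.exp (-(α * d^2)) * (2*α*d))))) :=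
    (hasDerivAt_iff_tendsto_slope.mp hFd).mono_left (nhdsWithin_mono 0 (fun t ht => by
      simp only [mem_compl_iff, mem_singleton_iff]; exact ne_of_gt ht))
  have hev : ∀ᶠ t in nhdsWithin 0 (Ioi 0), 0 ≤ slope F 0 t := by
    filter_upwards [Ioc_mem_nhdsGT_of_mem (Set.mem_Ico.mpr ⟨le_refl (0:ℝ), half_pos hdpos⟩)]
    intro t ht
    have h1 := hFnn t ht.1 ht.2
    have h2 : slope F 0 t = t⁻¹ * F t := by simp [slope, hF0]
    rw [h2]
    exact mul_nonneg (inv_nonneg.mpr (le_of_lt ht.1)) h1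
  have := ge_of_tendsto hslope hev
  linarith

set_option maxHeartbeats 1000000 in
lemma prop3 (hn : 1 ≤ n) {W : ℝ → ℝ} {u : E → ℝ}
    (hu : ContDiff ℝ 2 u) (heq : ∀ x, lap u x = deriv W (u x))
    (hpos : ∀ x, 0 < u x)
    {a δ : ℝ} (ha : 0 < a) (hδ : 0 < δ)
    (hWa : ∀ t, 0 ≤ t → t ≤ δ → deriv W t ≤ -(a * t))
    {x1 : E} (hx1 : u x1 ≤ δ) : False := by
  have hnpos : (0:ℝ) < n := by exact_mod_cast hn
  set k : ℝ := Real.sqrt (a / (2*n)) with hk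
  have hkpos : 0 < k := Real.sqrt_pos.mpr (by positivity)
  have hk2 : k^2 = a/(2*n) := Real.sq_sqrt (by positivity)
  have hnk2 : (n:ℝ) * k^2 = a/2 := by rw [hk2]; field_simp
  set r : ℝ := Real.pi / (2*k) with hr
  have hpi := Real.pi_pos
  have hrpos : 0 < r := by positivity
  have hkr : k * r = Real.pi / 2 := by rw [hr]; field_simp
  set Q : Set E := {x | ∀ j, |x j - x1 j| ≤ r} with hQ
  have hQclosed : IsClosed Q := by
    have hQeq : Q = ⋂ j, {x : E | |x j - x1 j| ≤ r} := by
      ext x; simp [hQ, Set.mem_iInter]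
    rw [hQeq]
    apply isClosed_iInter
    intro j
    have hc : Continuous fun x : E => |x j - x1 j| :=
      (((EuclideanSpace.proj (𝕜 := ℝ) j).continuous).sub continuous_const).abs
    exact isClosed_le hc continuous_const
  have hQsub : Q ⊆ closedBall x1 (Real.sqrt n * r) := by
    intro x hx
    rw [mem_closedBall, dist_eq_norm, EuclideanSpace.norm_eq]
    have h1 : ∑ j, ‖(x - x1) j‖^2 ≤ (n:ℝ) * r^2 := by
      calc ∑ j, ‖(x - x1) j‖^2 ≤ ∑ _j : Fin n, r^2 := by
            apply Finset.sum_le_sum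
            intro j _
            rw [PiLp.sub_apply, Real.norm_eq_abs]
            have h2 := hx j
            nlinarith [abs_nonneg (x j - x1 j), sq_abs (x j - x1 j)]
        _ = (n:ℝ) * r^2 := by
            rw [Finset.sum_const, Finset.card_univ, Fintype.card_fin, nsmul_eq_mul]
    calc Real.sqrt (∑ j, ‖(x - x1) j‖^2) ≤ Real.sqrt ((n:ℝ) * r^2) := Real.sqrt_le_sqrt h1
      _ = Real.sqrt n * r := by
          rw [Real.sqrt_mul (le_of_lt hnpos), Real.sqrt_sq (le_of_lt hrpos)]
  have hQcpt : IsCompact Q :=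
    (isCompact_closedBall x1 (Real.sqrt n * r)).of_isClosed_subset hQclosed hQsub
  have hx1Q : x1 ∈ Q := by
    intro j; simp [le_of_lt hrpos]
  set φ : E → ℝ := fun y => ∏ j, Real.cos (k * (y j - x1 j)) with hφ
  have hφc : ContDiff ℝ 2 φ := barrier_prod_contDiff (contDiff_cosk k) x1
  have hφ1 : φ x1 = 1 := by
    show (∏ j, Real.cos (k * (x1 j - x1 j))) = 1
    simp
  have hcosfac : ∀ x ∈ Q, ∀ j, 0 ≤ Real.cos (k * (x j - x1 j)) := by
    intro x hx j
    apply Real.cos_nonneg_of_mem_Icc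
    have h1 := hx j
    have h2 : |k * (x j - x1 j)| ≤ Real.pi / 2 := by
      rw [abs_mul, abs_of_pos hkpos]
      calc k * |x j - x1 j| ≤ k * r := by nlinarith
        _ = Real.pi / 2 := hkr
    rw [abs_le] at h2
    exact ⟨h2.1, h2.2⟩
  have hφnn : ∀ x ∈ Q, 0 ≤ φ x := fun x hx =>
    Finset.prod_nonneg (fun j _ => hcosfac x hx j)
  have hφle1 : ∀ x ∈ Q, φ x ≤ 1 := fun x hx =>
    Finset.prod_le_one (fun j _ => hcosfac x hx j) (fun j _ => Real.cos_le_one _)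
  set S : Set ℝ := {s | 0 ≤ s ∧ ∀ x ∈ Q, s * φ x ≤ u x} with hS
  have h0S : (0:ℝ) ∈ S := ⟨le_refl 0, fun x _ => by rw [zero_mul]; exact (hpos x).le⟩
  have hbddS : BddAbove S := by
    refine ⟨u x1, fun s hs => ?_⟩
    have := hs.2 x1 hx1Q
    rwa [hφ1, mul_one] at this
  have hSclosed : IsClosed S := by
    have hSeq : S = {s : ℝ | 0 ≤ s} ∩ ⋂ x ∈ Q, {s : ℝ | s * φ x ≤ u x} := by
      ext s; simp [hS, Set.mem_iInter]
    rw [hSeq]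
    apply IsClosed.inter (isClosed_le continuous_const continuous_id)
    apply isClosed_biInter
    intro x _
    exact isClosed_le (continuous_id.mul continuous_const) continuous_const
  set s0 := sSup S with hs0
  have hs0S : s0 ∈ S := hSclosed.csSup_mem ⟨0, h0S⟩ hbddS
  obtain ⟨xq, hxqQ, hxqmin⟩ := hQcpt.exists_isMinOn ⟨x1, hx1Q⟩ hu.continuous.continuousOn
  have hmq : 0 < u xq := hpos xq
  have hmqS : u xq ∈ S := by
    refine ⟨hmq.le, fun x hx => ?_⟩
    calc u xq * φ x ≤ u xq * 1 := mul_le_mul_of_nonneg_left (hφle1 x hx) hmq.le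
      _ = u xq := mul_one _
      _ ≤ u x := hxqmin hx
  have hs0pos : 0 < s0 := lt_of_lt_of_le hmq (le_csSup hbddS hmqS)
  have hs0le : s0 ≤ u x1 := by
    have := hs0S.2 x1 hx1Q
    rwa [hφ1, mul_one] at this
  have htouch : ∃ x ∈ Q, u x = s0 * φ x := by
    by_contra hno
    push_neg at hno
    obtain ⟨xw, hxwQ, hxwmin⟩ := hQcpt.exists_isMinOn ⟨x1, hx1Q⟩
      (hu.continuous.sub (continuous_const.mul hφc.continuous)).continuousOn
    set m' := u xw - s0 * φ xw with hm'
    have hm'pos : 0 < m' := by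
      have h1 : s0 * φ xw ≤ u xw := hs0S.2 xw hxwQ
      have h2 : u xw ≠ s0 * φ xw := hno xw hxwQ
      rw [hm']
      rcases lt_or_eq_of_le h1 with h | h
      · linarith
      · exact absurd h.symm h2
    have hsum : s0 + m' ∈ S := by
      refine ⟨by linarith, fun x hx => ?_⟩
      have h1 : m' ≤ u x - s0 * φ x := hxwmin hx
      have h2 : m' * φ x ≤ m' * 1 := mul_le_mul_of_nonneg_left (hφle1 x hx) hm'pos.le
      nlinarith
    have := le_csSup hbddS hsum
    linarith
  obtain ⟨xt, hxtQ, hxteq⟩ := htouch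
  have hφtle1 : φ xt ≤ 1 := hφle1 xt hxtQ
  have hut : u xt ≤ δ := by
    have h1 : u xt ≤ s0 := by
      rw [hxteq]
      calc s0 * φ xt ≤ s0 * 1 := mul_le_mul_of_nonneg_left hφtle1 hs0pos.le
        _ = s0 := mul_one _
    linarith
  have hφtpos : 0 < φ xt := by
    have h1 : 0 < u xt := hpos xt
    rw [hxteq] at h1
    by_contra hc
    push_neg at hc
    nlinarith
  have hint : ∀ j, |xt j - x1 j| < r := by
    intro j
    rcases lt_or_eq_of_le (hxtQ j) with h | h
    · exact h
    · exfalso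
      have hcos0 : Real.cos (k * (xt j - x1 j)) = 0 := by
        rcases (abs_eq (le_of_lt hrpos)).mp h with h2 | h2
        · rw [h2, hkr, Real.cos_pi_div_two]
        · rw [h2]
          have : k * -r = -(k*r) := by ring
          rw [this, hkr, Real.cos_neg, Real.cos_pi_div_two]
      have : φ xt = 0 := Finset.prod_eq_zero (Finset.mem_univ j) hcos0
      linarith
  set O : Set E := ⋂ j, {x : E | |x j - x1 j| < r} with hO
  have hOopen : IsOpen O := by
    apply isOpen_iInter_of_finite
    intro j
    have hc : Continuous fun x : E => |x j - x1 j| :=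
      (((EuclideanSpace.proj (𝕜 := ℝ) j).continuous).sub continuous_const).abs
    exact isOpen_lt hc continuous_const
  have hxtO : xt ∈ O := by
    rw [hO, Set.mem_iInter]
    intro j
    exact hint j
  have hOQ : O ⊆ Q := by
    intro x hx j
    rw [hO, Set.mem_iInter] at hx
    exact le_of_lt (hx j)
  set w : E → ℝ := fun y => u y + (-s0) * φ y with hw
  have hwc : ContDiff ℝ 2 w := hu.add (contDiff_const.mul hφc)
  have hwmin : IsLocalMin w xt := by
    have hnb : O ∈ nhds xt := hOopen.mem_nhds hxtO
    refine Filter.eventually_of_mem hnb (fun y hy => ?_)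
    have h1 : s0 * φ y ≤ u y := hs0S.2 y (hOQ hy)
    show u xt + (-s0) * φ xt ≤ u y + (-s0) * φ y
    have hz : u xt + (-s0) * φ xt = 0 := by rw [hxteq]; ring
    rw [hz]
    linarith
  have h0 : 0 ≤ lap w xt := lap_nonneg_of_isLocalMin hwc hwmin
  have hlapw : lap w xt = deriv W (u xt) + (-s0) * (-(k^2) * n * φ xt) := by
    rw [hw, lap_add_const_mul hu hφc (-s0) xt, heq xt, lap_cos k x1 xt]
  have hWt : deriv W (u xt) ≤ -(a * u xt) := hWa (u xt) (hpos xt).le hut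
  have hkey : (-s0) * (-(k^2) * n * φ xt) = (a/2) * u xt := by
    have : (-s0) * (-(k^2) * n * φ xt) = ((n:ℝ) * k^2) * (s0 * φ xt) := by ring
    rw [this, hnk2, ← hxteq]
  rw [hlapw, hkey] at h0
  have h1 : 0 < u xt := hpos xt
  nlinarith

end Stmt9Aux

open Stmt9Aux in
theorem stmt9 (n : ℕ) (hn : 1 ≤ n) (W : ℝ → ℝ) (μ : ℝ)
    (hW3 : ContDiff ℝ 3 W) (hW : CondA' W μ)
    (hW0 : deriv W 0 = 0 → deriv (deriv W) 0 < 0)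
    (hW' : ∀ t ∈ Set.Ioo (0:ℝ) μ, deriv W t < 0)
    (u : EuclideanSpace ℝ (Fin n) → ℝ) (hu : ContDiff ℝ 2 u)
    (heq : ∀ x, lap u x = deriv W (u x))
    (hbd : ∀ x, 0 ≤ u x ∧ u x ≤ μ) :
    (∀ x, u x = 0) ∨ (∀ x, u x = μ) := by
  obtain ⟨hWC2, hμ, hWμ, hWposIco, hWnn, -⟩ := hW
  have hW'cont : Continuous (deriv W) := (cd1_deriv hWC2).continuous
  have hW'μ : deriv W μ = 0 := by
    apply IsLocalMin.deriv_eq_zero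
    apply Filter.Eventually.of_forall
    intro t
    rw [hWμ]; exact hWnn t
  have hW'0le : deriv W 0 ≤ 0 := by
    have ht : Tendsto (deriv W) (nhdsWithin 0 (Ioi 0)) (nhds (deriv W 0)) :=
      (hW'cont.continuousAt).continuousWithinAt.tendsto
    apply le_of_tendsto ht
    filter_upwards [Ioo_mem_nhdsGT_of_mem (Set.mem_Ico.mpr ⟨le_refl (0:ℝ), hμ⟩)]
    intro t htm
    exact le_of_lt (hW' t htm)
  have hW'le0 : ∀ t, 0 ≤ t → t ≤ μ → deriv W t ≤ 0 := by
    intro t h0 hμt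
    rcases eq_or_lt_of_le h0 with h | h
    · rw [← h]; exact hW'0le
    rcases eq_or_lt_of_le hμt with h2 | h2
    · rw [h2, hW'μ]
    · exact le_of_lt (hW' t ⟨h, h2⟩)
  have hbd1 : ∀ x, 0 ≤ u x := fun x => (hbd x).1
  rcases eq_or_lt_of_le hW'0le with hzero | hneg
  · -- deriv W 0 = 0
    have hW2 : deriv (deriv W) 0 < 0 := hW0 hzero
    set a : ℝ := -(deriv (deriv W) 0)/2 with hadef
    have ha : 0 < a := by rw [hadef]; linarith
    -- find δ
    have hd2 : HasDerivAt (deriv W) (deriv (deriv W) 0) 0 :=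
      (((cd1_deriv hWC2).differentiable (by norm_num)) 0).hasDerivAt
    have hs' : Tendsto (slope (deriv W) 0) (nhdsWithin 0 (Ioi 0))
        (nhds (deriv (deriv W) 0)) :=
      (hasDerivAt_iff_tendsto_slope.mp hd2).mono_left (nhdsWithin_mono 0 (fun t ht => by
        simp only [mem_compl_iff, mem_singleton_iff]; exact ne_of_gt ht))
    have hev : ∀ᶠ t in nhdsWithin 0 (Ioi 0), slope (deriv W) 0 t < -a :=
      hs'.eventually_lt_const (by rw [hadef]; linarith)
    rw [eventually_iff] at hev
    obtain ⟨δ0, hδ0, hIoc⟩ := mem_nhdsGT_iff_exists_Ioc_subset.mp hev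
    have hδ0pos : (0:ℝ) < δ0 := hδ0
    set δ := δ0 with hδdef
    have hδpos : 0 < δ := hδ0pos
    have hWa : ∀ t, 0 ≤ t → t ≤ δ → deriv W t ≤ -(a * t) := by
      intro t h0 htδ
      rcases eq_or_lt_of_le h0 with h | h
      · rw [← h, hzero]; norm_num
      · have hsl : slope (deriv W) 0 t < -a := hIoc ⟨h, htδ⟩
        have heq2 : slope (deriv W) 0 t = deriv W t / t := by
          rw [slope_def_field, hzero]
          norm_num
        rw [heq2, div_lt_iff₀ h] at hsl
        nlinarith
    by_cases hzu : ∀ x, u x = 0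
    · exact Or.inl hzu
    · right
      push_neg at hzu
      obtain ⟨x2, hx2⟩ := hzu
      have hx2' : 0 < u x2 := lt_of_le_of_ne (hbd x2).1 (Ne.symm hx2)
      have hupos : ∀ x, 0 < u x := prop2 hn hu heq hbd hW'le0 hx2'
      have hgtδ : ∀ x, δ < u x := by
        intro x
        by_contra hle
        push_neg at hle
        exact prop3 hn hu heq hupos ha hδpos hWa hle
      have hδμ : δ < μ := lt_of_lt_of_le (hgtδ x2) (hbd x2).2
      intro x
      have key : ∀ θ, δ < θ → θ < μ → θ ≤ u x := by
        intro θ hθδ hθμ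
        obtain ⟨tb, htbmem, htbmax⟩ := (isCompact_Icc (a := δ) (b := θ)).exists_isMaxOn
          ⟨δ, Set.left_mem_Icc.mpr (le_of_lt hθδ)⟩ hW'cont.continuousOn
        have htb : deriv W tb < 0 := by
          apply hW'
          constructor
          · exact lt_of_lt_of_le hδpos htbmem.1
          · exact lt_of_le_of_lt htbmem.2 hθμ
        have hWc' : ∀ t, δ ≤ t → t ≤ θ → deriv W t ≤ -(-(deriv W tb)) := by
          intro t h1 h2
          have := htbmax (Set.mem_Icc.mpr ⟨h1, h2⟩)
          simpa using this
        exact prop1 hn hu heq (by linarith : (0:ℝ) < -(deriv W tb))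
          (fun y => le_of_lt (hgtδ y)) hWc' x
      by_contra hne
      have hlt : u x < μ := lt_of_le_of_ne (hbd x).2 hne
      have h1 := key ((u x + μ)/2) (by have := hgtδ x; linarith) (by linarith)
      linarith
  · -- deriv W 0 < 0
    right
    intro x
    have key : ∀ θ, 0 < θ → θ < μ → θ ≤ u x := by
      intro θ hθ0 hθμ
      obtain ⟨tb, htbmem, htbmax⟩ := (isCompact_Icc (a := (0:ℝ)) (b := θ)).exists_isMaxOn
        ⟨0, Set.left_mem_Icc.mpr (le_of_lt hθ0)⟩ hW'cont.continuousOn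
      have htb : deriv W tb < 0 := by
        rcases eq_or_lt_of_le htbmem.1 with h | h
        · rw [← h]; exact hneg
        · exact hW' tb ⟨h, lt_of_le_of_lt htbmem.2 hθμ⟩
      have hWc' : ∀ t, 0 ≤ t → t ≤ θ → deriv W t ≤ -(-(deriv W tb)) := by
        intro t h1 h2
        have := htbmax (Set.mem_Icc.mpr ⟨h1, h2⟩)
        simpa using this
      exact prop1 hn hu heq (by linarith : (0:ℝ) < -(deriv W tb)) hbd1 hWc' x
    by_contra hne
    have hlt : u x < μ := lt_of_le_of_ne (hbd x).2 hne
    have h1 := key ((u x + μ)/2) (by have := hbd1 x; linarith) (by linarith)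
    linarith
end
end

section
/- Suppose W ∈ C^{1,1}(ℝ) (W is C¹ with Lipschitz derivative), W(t) ≥ 0 for all t ∈ ℝ, W(μ) = 0, and W(t) > 0 for all t ∈ (μ_−, μ), where μ_− < μ. If u ∈ C²(ℝⁿ) satisfies Δu = W'(u) on ℝⁿ, μ_− ≤ u(x) ≤ μ for all x ∈ ℝⁿ, and u(x₁, x') → μ uniformly in x' ∈ ℝ^{n−1} both as x₁ → +∞ and as x₁ → −∞, then u ≡ μ on ℝⁿ. -/
open Metric Set Filter Pointwise
open scoped Topology

noncomputable section

namespace Stmt18Helpers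

/-- Second derivative test: if `g` has a local minimum at `0` (witnessed on `Ioo (-r) r`),
with derivative `g'` on that interval and `g'` differentiable at `0` with derivative `c`,
then `0 ≤ c`. -/
lemma second_deriv_nonneg {g g' : ℝ → ℝ} {c r : ℝ} (hr : 0 < r)
    (hd1 : ∀ t ∈ Set.Ioo (-r) r, HasDerivAt g (g' t) t)
    (hd2 : HasDerivAt g' c 0)
    (hmin : ∀ t ∈ Set.Ioo (-r) r, g 0 ≤ g t) : 0 ≤ c := by
  by_contra hc
  push_neg at hc
  have h0mem : (0:ℝ) ∈ Set.Ioo (-r) r := ⟨by linarith, hr⟩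
  have hloc : IsLocalMin g 0 := by
    have : Set.Ioo (-r) r ∈ 𝓝 (0:ℝ) := isOpen_Ioo.mem_nhds h0mem
    exact Filter.eventually_of_mem this (fun t ht => hmin t ht)
  have hg'0 : g' 0 = 0 := hloc.hasDerivAt_eq_zero (hd1 0 h0mem)
  -- slope of g' at 0 tends to c < 0
  have hslope := hasDerivAt_iff_tendsto_slope.1 hd2
  have hev : ∀ᶠ t in 𝓝[>] (0:ℝ), slope g' 0 t < c / 2 := by
    have h2 : ∀ᶠ t in 𝓝[≠] (0:ℝ), slope g' 0 t < c / 2 :=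
      hslope.eventually (eventually_lt_nhds (show c < c/2 by linarith))
    exact h2.filter_mono (nhdsWithin_mono _ (fun t ht => ne_of_gt ht))
  obtain ⟨δ, hδmem, hδ⟩ := mem_nhdsGT_iff_exists_Ioo_subset.1 hev
  set δ' := min δ r with hδ'
  have hδ'pos : 0 < δ' := lt_min (by exact hδmem) hr
  have hneg : ∀ t ∈ Set.Ioo (0:ℝ) δ', g' t < 0 := by
    intro t ht
    have ht' : t ∈ Set.Ioo (0:ℝ) δ := ⟨ht.1, lt_of_lt_of_le ht.2 (min_le_left _ _)⟩
    have := hδ ht'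
    have hslope_t : slope g' 0 t < c / 2 := this
    rw [slope_def_field, hg'0, sub_zero, sub_zero] at hslope_t
    have htpos : 0 < t := ht.1
    rw [div_lt_iff₀ htpos] at hslope_t
    nlinarith
  have hd'r : δ' ≤ r := min_le_right _ _
  have hanti : StrictAntiOn g (Set.Icc 0 (δ'/2)) := by
    apply strictAntiOn_of_deriv_neg (convex_Icc _ _)
    · intro t ht
      have htm : t ∈ Set.Ioo (-r) r := ⟨by linarith [ht.1], by linarith [ht.2]⟩
      exact (hd1 t htm).continuousAt.continuousWithinAt
    · intro t ht
      rw [interior_Icc] at ht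
      rw [(hd1 t ⟨by linarith [ht.1], by linarith [ht.2]⟩).deriv]
      exact hneg t ⟨ht.1, by linarith [ht.2]⟩
  have h1 : g (δ'/2) < g 0 :=
    hanti (Set.left_mem_Icc.2 (by linarith)) (Set.right_mem_Icc.2 (by linarith)) (by linarith)
  have h2 : g 0 ≤ g (δ'/2) := hmin _ ⟨by linarith, by linarith⟩
  linarith


variable {n : ℕ}

local notation "E" => EuclideanSpace ℝ (Fin n)

lemma coord_line (q : E) (t : ℝ) (i j : Fin n) :
    (q + t • EuclideanSpace.single i (1:ℝ)) j = q j + t * (if j = i then 1 else 0) := by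
  simp [EuclideanSpace.single_apply]

lemma continuous_coord (j : Fin n) : Continuous (fun x : E => x j) := by
  exact (continuous_apply j).comp (PiLp.continuousLinearEquiv 2 ℝ (fun _ : Fin n => ℝ)).continuous

lemma line_hasDerivAt {u : E → ℝ} (hu : Differentiable ℝ u) (x v : E) (t : ℝ) :
    HasDerivAt (fun s : ℝ => u (x + s • v)) (fderiv ℝ u (x + t • v) v) t := by
  have hline : HasDerivAt (fun s : ℝ => x + s • v) v t := by
    have h1 : HasDerivAt (fun s : ℝ => s • v) ((1:ℝ) • v) t := (hasDerivAt_id t).smul_const v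
    simpa using h1.const_add x
  exact (hu (x + t • v)).hasFDerivAt.comp_hasDerivAt t hline

lemma line_hasDerivAt2 {u : E → ℝ} (hu : ContDiff ℝ 2 u) (x v : E) :
    HasDerivAt (fun s : ℝ => fderiv ℝ u (x + s • v) v)
      (fderiv ℝ (fun y => fderiv ℝ u y v) x v) 0 := by
  have hfd : ContDiff ℝ 1 (fderiv ℝ u) := hu.fderiv_right (by norm_num)
  have hdiff : DifferentiableAt ℝ (fun y : E => fderiv ℝ u y v) x := by
    exact ((hfd.differentiable one_ne_zero) x).clm_apply (differentiableAt_const v)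
  have hline : HasDerivAt (fun s : ℝ => x + s • v) v 0 := by
    have h1 : HasDerivAt (fun s : ℝ => s • v) ((1:ℝ) • v) 0 := (hasDerivAt_id 0).smul_const v
    simpa using h1.const_add x
  have hx0 : x = x + (0:ℝ) • v := by simp
  have := (hx0 ▸ hdiff.hasFDerivAt).comp_hasDerivAt 0 hline
  simpa [← hx0, Function.comp_def] using this

lemma exists_min_of_radius {f : E → ℝ} (hf : Continuous f) (a : E) (R : ℝ)
    (hcoer : ∀ x, R < dist x a → f a ≤ f x) : ∃ q, ∀ x, f q ≤ f x := by
  have hmem : a ∈ closedBall a (max R 0) := by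
    simp [Metric.mem_closedBall, le_max_right]
  obtain ⟨q, hqK, hq⟩ := (isCompact_closedBall a (max R 0)).exists_isMinOn ⟨a, hmem⟩
    hf.continuousOn
  refine ⟨q, fun x => ?_⟩
  by_cases hx : dist x a ≤ max R 0
  · exact hq hx
  · exact le_trans (hq hmem) (hcoer x (lt_of_le_of_lt (le_max_left _ _) (not_le.1 hx)))

lemma penalty_eq_dist_sq (a x : E) : ∑ i, (x i - a i)^2 = dist x a ^ 2 := by
  have h : (0:ℝ) ≤ ∑ i, (x i - a i)^2 := Finset.sum_nonneg fun i _ => sq_nonneg _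
  rw [EuclideanSpace.dist_eq]
  simp only [Real.dist_eq]
  rw [Real.sq_sqrt (by simpa [Real.dist_eq, sq_abs] using h)]
  simp [sq_abs]

lemma penalty_line (a q : E) (i : Fin n) (t : ℝ) :
    ∑ j, ((q + t • EuclideanSpace.single i (1:ℝ)) j - a j)^2
      = (∑ j, (q j - a j)^2) + (2 * (q i - a i) * t + t^2) := by
  have h : ∀ j : Fin n, ((q + t • EuclideanSpace.single i (1:ℝ)) j - a j)^2
      = (q j - a j)^2 + (if j = i then 2 * (q i - a i) * t + t^2 else 0) := by
    intro j
    rw [coord_line]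
    by_cases hji : j = i
    · subst hji; simp; ring
    · simp [hji]
  rw [Finset.sum_congr rfl (fun j _ => h j), Finset.sum_add_distrib]
  congr 1
  simp


lemma kernel {u : E → ℝ} (hu : ContDiff ℝ 2 u) (i₀ : Fin n)
    {φ Dφ : ℝ → ℝ} {O : Set ℝ} (hO : IsOpen O)
    (hφd : ∀ y ∈ O, HasDerivAt φ (Dφ y) y)
    {a q : E} {ε c : ℝ}
    (hqO : q i₀ ∈ O) (hφ2 : HasDerivAt Dφ c (q i₀))
    (hq : ∀ x : E, u q - φ (q i₀) + ε * (∑ i, (q i - a i)^2)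
        ≤ u x - φ (x i₀) + ε * (∑ i, (x i - a i)^2)) :
    0 ≤ lap u q - c + 2 * n * ε := by
  obtain ⟨r, hr, hball⟩ := Metric.isOpen_iff.1 hO (q i₀) hqO
  have hud : Differentiable ℝ u := hu.differentiable (by norm_num)
  have claim : ∀ i : Fin n,
      0 ≤ fderiv ℝ (fun y => fderiv ℝ u y (EuclideanSpace.single i 1)) q
            (EuclideanSpace.single i 1) - (if i₀ = i then c else 0) + 2 * ε := by
    intro i
    set v : E := EuclideanSpace.single i (1:ℝ) with hv
    set A : ℝ := q i - a i with hA
    set Qc : ℝ := ∑ j, (q j - a j)^2 with hQc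
    have hq0 : q + (0:ℝ) • v = q := by simp
    have hpen : ∀ t : ℝ, HasDerivAt (fun s : ℝ => ε * (Qc + (2*A*s + s^2)))
        (ε * (2*A + 2*t)) t := by
      intro t
      have hp : HasDerivAt (fun s : ℝ => Qc + (2*A*s + s^2)) (2*A + 2*t) t := by
        have h1 : HasDerivAt (fun s : ℝ => 2*A*s) (2*A) t := by
          simpa using (hasDerivAt_id t).const_mul (2*A)
        have h2 : HasDerivAt (fun s : ℝ => s^2) (2*t) t := by
          simpa using hasDerivAt_pow 2 t
        simpa using (h1.add h2).const_add Qc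
      simpa using hp.const_mul ε
    by_cases hi : i₀ = i
    · -- moving coordinate
      have hcoord : ∀ t : ℝ, (q + t • v) i₀ = q i₀ + t := by
        intro t; rw [hv, coord_line]; rw [if_pos hi]; ring
      have hmem : ∀ t : ℝ, t ∈ Set.Ioo (-r) r → q i₀ + t ∈ O := by
        intro t ht
        apply hball
        rw [mem_ball, Real.dist_eq, add_sub_cancel_left]
        exact abs_lt.2 ⟨ht.1, ht.2⟩
      have key : 0 ≤ fderiv ℝ (fun y => fderiv ℝ u y v) q v - c + ε * 2 := by
        apply second_deriv_nonneg (g := fun s : ℝ => u (q + s • v) - φ (q i₀ + s)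
            + ε * (Qc + (2*A*s + s^2)))
          (g' := fun s : ℝ => fderiv ℝ u (q + s • v) v - Dφ (q i₀ + s) + ε * (2*A + 2*s)) hr
        · intro t ht
          have h1 := line_hasDerivAt hud q v t
          have h2 : HasDerivAt (fun s : ℝ => φ (q i₀ + s)) (Dφ (q i₀ + t)) t := by
            have := (hφd _ (hmem t ht)).comp t ((hasDerivAt_id t).const_add (q i₀))
            simpa [Function.comp_def] using this
          exact (h1.sub h2).add (hpen t)
        · have h1 := line_hasDerivAt2 hu q v
          have h2 : HasDerivAt (fun s : ℝ => Dφ (q i₀ + s)) c 0 := by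
            have hphi2' : HasDerivAt Dφ c (q i₀ + 0) := by simpa using hφ2
            have := hphi2'.comp 0 ((hasDerivAt_id 0).const_add (q i₀))
            simpa [Function.comp_def] using this
          have h3 : HasDerivAt (fun s : ℝ => ε * (2*A + 2*s)) (ε * 2) 0 := by
            have : HasDerivAt (fun s : ℝ => 2*A + 2*s) 2 0 := by
              simpa using ((hasDerivAt_id (0:ℝ)).const_mul 2).const_add (2*A)
            simpa using this.const_mul ε
          exact (h1.sub h2).add h3
        · intro t _
          have hL := hq (q + t • v)
          calc u (q + (0:ℝ) • v) - φ (q i₀ + 0) + ε * (Qc + (2*A*0 + 0^2))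
              = u q - φ (q i₀) + ε * Qc := by rw [hq0]; ring_nf
            _ ≤ u (q + t • v) - φ ((q + t • v) i₀) + ε * (∑ j, ((q + t • v) j - a j)^2) := hL
            _ = u (q + t • v) - φ (q i₀ + t) + ε * (Qc + (2*A*t + t^2)) := by
                rw [hcoord, hv, penalty_line]
      rw [if_pos hi]
      linarith [key]
    · -- fixed coordinate
      have hcoord : ∀ t : ℝ, (q + t • v) i₀ = q i₀ := by
        intro t; rw [hv, coord_line]; rw [if_neg hi]; ring
      have key : 0 ≤ fderiv ℝ (fun y => fderiv ℝ u y v) q v + ε * 2 := by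
        apply second_deriv_nonneg (g := fun s : ℝ => u (q + s • v) - φ (q i₀)
            + ε * (Qc + (2*A*s + s^2)))
          (g' := fun s : ℝ => fderiv ℝ u (q + s • v) v + ε * (2*A + 2*s)) hr
        · intro t _
          have h1 := line_hasDerivAt hud q v t
          have := (h1.sub_const (φ (q i₀))).add (hpen t)
          exact this
        · have h1 := line_hasDerivAt2 hu q v
          have h3 : HasDerivAt (fun s : ℝ => ε * (2*A + 2*s)) (ε * 2) 0 := by
            have : HasDerivAt (fun s : ℝ => 2*A + 2*s) 2 0 := by
              simpa using ((hasDerivAt_id (0:ℝ)).const_mul 2).const_add (2*A)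
            simpa using this.const_mul ε
          exact h1.add h3
        · intro t _
          have hL := hq (q + t • v)
          calc u (q + (0:ℝ) • v) - φ (q i₀) + ε * (Qc + (2*A*0 + 0^2))
              = u q - φ (q i₀) + ε * Qc := by rw [hq0]; ring_nf
            _ ≤ u (q + t • v) - φ ((q + t • v) i₀) + ε * (∑ j, ((q + t • v) j - a j)^2) := hL
            _ = u (q + t • v) - φ (q i₀) + ε * (Qc + (2*A*t + t^2)) := by
                rw [hcoord, hv, penalty_line]
      rw [if_neg hi]
      linarith [key]
  have hsum := Finset.sum_nonneg (fun i (_ : i ∈ Finset.univ) => claim i)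
  have hexp : ∑ i : Fin n, (fderiv ℝ (fun y => fderiv ℝ u y (EuclideanSpace.single i 1)) q
        (EuclideanSpace.single i 1) - (if i₀ = i then c else 0) + 2 * ε)
      = lap u q - c + 2 * n * ε := by
    rw [Finset.sum_add_distrib, Finset.sum_sub_distrib, Finset.sum_ite_eq]
    simp [lap, Finset.card_univ, mul_comm]
    ring
  rw [hexp] at hsum
  exact hsum


set_option maxHeartbeats 1000000 in
lemma front_exists {W : ℝ → ℝ} (hWd : Differentiable ℝ W) {Lr : ℝ} (hLr : 1 ≤ Lr)
    (hLip : ∀ a b : ℝ, |deriv W a - deriv W b| ≤ Lr * |a - b|)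
    (hWnn : ∀ t, 0 ≤ W t) {m μ : ℝ} (hmμ : m < μ) (hWμ : W μ = 0) (hWm : 0 < W m) :
    ∃ (β κ σ P Gm yθ : ℝ) (ψ Dψ : ℝ → ℝ),
      0 < κ ∧ 0 < σ ∧ m < β ∧ β < μ ∧ 0 < P ∧ 0 < Gm ∧ 0 < yθ ∧
      (∀ x, ψ x < β) ∧ ψ 0 = m - σ ∧ StrictAnti ψ ∧ Continuous ψ ∧
      (∀ x, x < 0 → HasDerivAt ψ (Dψ x) x) ∧
      (∀ x, x < 0 → HasDerivAt Dψ (deriv W (ψ x) + κ) x) ∧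
      (∀ x x', x < x' → x' < 0 → |ψ x - ψ x'| ≤ P * (x' - x)) ∧
      ψ (-Gm) = m ∧ ψ (-yθ) = (m + β)/2 := by
  have hWc : Continuous W := hWd.continuous
  set ρ : ℝ := W m with hρ
  -- σ from continuity of W at m
  obtain ⟨σ0, hσ0pos, hσ0⟩ := Metric.continuousAt_iff.1 hWc.continuousAt (ρ/2) (by linarith)
  set σ : ℝ := min (σ0/4) 1 with hσ
  have hσpos : 0 < σ := lt_min (by linarith) one_pos
  have hσ1 : σ ≤ 1 := min_le_right _ _
  have hWlow : ∀ t, m - 2*σ ≤ t → t ≤ m → ρ/2 ≤ W t := by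
    intro t h1 h2
    have h2σ : 2*σ ≤ σ0/2 := by
      have := min_le_left (σ0/4) 1
      have : σ ≤ σ0/4 := this
      linarith
    have hd : dist t m < σ0 := by
      rw [Real.dist_eq, abs_lt]
      constructor <;> linarith
    have := hσ0 hd
    rw [Real.dist_eq] at this
    have := abs_lt.1 this
    linarith [this.1]
  set κ : ℝ := ρ / (4*(μ - m + 3)) with hκ
  have hκpos : 0 < κ := by
    apply div_pos hWm
    nlinarith
  set V : ℝ → ℝ := fun t => W t + κ * t with hV
  have hVd : Differentiable ℝ V := hWd.add (differentiable_id.const_mul κ)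
  have hVder : ∀ t, HasDerivAt V (deriv W t + κ) t := by
    intro t
    have h1 : HasDerivAt (fun s : ℝ => κ * s) κ t := by
      simpa using (hasDerivAt_id t).const_mul κ
    exact ((hWd t).hasDerivAt).add h1
  have hVc : Continuous V := hVd.continuous
  -- W'(μ) = 0
  have hWμmin : IsLocalMin W μ := Filter.Eventually.of_forall fun y => by
    rw [hWμ]; exact hWnn y
  have hW'μ : deriv W μ = 0 := hWμmin.deriv_eq_zero
  -- a point t₁ near μ with V t₁ < κ * μ
  have ht₁ : ∃ t₁, m < t₁ ∧ t₁ < μ ∧ V t₁ < κ * μ := by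
    have hd : HasDerivAt W 0 μ := by
      have := (hWd μ).hasDerivAt
      rwa [hW'μ] at this
    have hslope := hasDerivAt_iff_tendsto_slope.1 hd
    have h1 : ∀ᶠ t in 𝓝[<] μ, |slope W μ t| < κ := by
      have : ∀ᶠ t in 𝓝[≠] μ, |slope W μ t| < κ := by
        have habs : Tendsto (fun t => |slope W μ t|) (𝓝[≠] μ) (𝓝 |0|) := hslope.abs
        rw [abs_zero] at habs
        exact habs.eventually (eventually_lt_nhds hκpos)
      exact this.filter_mono (nhdsWithin_mono _ (fun t ht => ne_of_lt ht))
    have hmaxlt : max m (μ-1) < μ := max_lt hmμ (by linarith)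
    have h2 : Set.Ioo (max m (μ-1)) μ ∈ 𝓝[<] μ :=
      Ioo_mem_nhdsLT_of_mem ⟨hmaxlt, le_rfl⟩
    obtain ⟨t₁, ht₁a, ht₁b⟩ := (h1.and (Filter.eventually_of_mem h2 (fun t ht => ht))).exists
    refine ⟨t₁, lt_of_le_of_lt (le_max_left _ _) ht₁b.1, ht₁b.2, ?_⟩
    have hWt₁ : W t₁ < κ * (μ - t₁) := by
      have hne : t₁ - μ < 0 := by linarith [ht₁b.2]
      rw [slope_def_field, hWμ, sub_zero] at ht₁a
      rw [abs_div] at ht₁a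
      have h3 : |t₁ - μ| = μ - t₁ := by rw [abs_of_neg hne]; ring
      rw [h3, abs_of_nonneg (hWnn t₁), div_lt_iff₀ (by linarith)] at ht₁a
      linarith [ht₁a]
    have : V t₁ = W t₁ + κ * t₁ := rfl
    nlinarith
  obtain ⟨t₁, ht₁m, ht₁μ, ht₁V⟩ := ht₁
  -- minimize V on K
  set K : Set ℝ := Set.Icc (m - 2*σ) μ with hK
  have hKne : K.Nonempty := ⟨μ, by constructor <;> [linarith; linarith]⟩
  obtain ⟨β', hβ'K, hβ'min⟩ := isCompact_Icc.exists_isMinOn hKne hVc.continuousOn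
  set vmin : ℝ := V β' with hvmin
  have hmin' : ∀ t ∈ K, vmin ≤ V t := fun t ht => hβ'min ht
  set A : Set ℝ := K ∩ V ⁻¹' {vmin} with hA
  have hAclosed : IsClosed A := isClosed_Icc.inter (isClosed_singleton.preimage hVc)
  have hAne : A.Nonempty := ⟨β', hβ'K, rfl⟩
  have hAbdd : BddBelow A := ⟨m - 2*σ, fun t ht => ht.1.1⟩
  set β : ℝ := sInf A with hβ
  have hβA : β ∈ A := hAclosed.csInf_mem hAne hAbdd
  have hβK : β ∈ K := hβA.1
  have hVβ : V β = vmin := hβA.2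
  have hβlow : ∀ t ∈ A, β ≤ t := fun t ht => csInf_le hAbdd ht
  have hVgt : ∀ t, m - 2*σ ≤ t → t < β → vmin < V t := by
    intro t h1 h2
    have htK : t ∈ K := ⟨h1, le_trans h2.le hβK.2⟩
    rcases lt_or_eq_of_le (hmin' t htK) with h | h
    · exact h
    · exact absurd (hβlow t ⟨htK, h.symm⟩) (not_le.2 h2)
  have ht₁K : t₁ ∈ K := ⟨by linarith, by linarith⟩
  have hvminlt : vmin < κ * μ := lt_of_le_of_lt (hmin' t₁ ht₁K) ht₁V
  -- m < β
  have hβm : m < β := by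
    by_contra h
    push_neg at h
    have hWβ : ρ/2 ≤ W β := hWlow β hβK.1 h
    have h1 : vmin = W β + κ * β := hVβ.symm
    have h2 : κ * (μ - m + 2*σ) ≤ κ * (μ - m + 3) := by
      apply mul_le_mul_of_nonneg_left _ hκpos.le
      linarith
    have hden : (μ - m + 3) ≠ 0 := by nlinarith
    have h3 : κ * (μ - m + 3) = ρ/4 := by
      rw [hκ]; field_simp
    nlinarith [hβK.1]
  have hβμ : β < μ := by
    rcases lt_or_eq_of_le hβK.2 with h | h
    · exact h
    · exfalso
      have : V μ = κ * μ := by simp [hV, hWμ]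
      rw [h, this] at hVβ
      linarith
  -- derivative of V at β is 0
  have hVβ' : deriv W β + κ = 0 := by
    have hloc : IsLocalMin V β := by
      have hmem : Set.Icc (m - 2*σ) μ ∈ 𝓝 β := Icc_mem_nhds (by linarith) hβμ
      apply Filter.eventually_of_mem hmem
      intro t ht
      rw [hVβ]; exact hmin' t ht
    have := hloc.deriv_eq_zero
    rwa [(hVder β).deriv] at this
  -- quadratic bound
  have hquad : ∀ t, t ≤ β → V t ≤ vmin + Lr/2 * (t - β)^2 := by
    intro t ht
    rcases eq_or_lt_of_le ht with h | h
    · subst h; simp [hVβ]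
    set φq : ℝ → ℝ := fun s => vmin + Lr/2 * (s - β)^2 - V s with hφq
    have hφqd : ∀ s, HasDerivAt φq (Lr * (s - β) - (deriv W s + κ)) s := by
      intro s
      have h1 : HasDerivAt (fun s : ℝ => (s - β)^2) (2*(s - β)) s := by
        have := (hasDerivAt_pow 2 (s - β)).comp s ((hasDerivAt_id s).sub_const β)
        simpa [mul_comm, Function.comp_def] using this
      have h2 : HasDerivAt (fun s : ℝ => vmin + Lr/2 * (s - β)^2)
          (Lr/2 * (2*(s - β))) s := (h1.const_mul (Lr/2)).const_add vmin
      have := h2.sub (hVder s)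
      have e : Lr * (s - β) - (deriv W s + κ) = Lr/2 * (2*(s - β)) - (deriv W s + κ) := by ring
      rw [e]; exact this
    have hmono : AntitoneOn φq (Set.Icc t β) := by
      apply antitoneOn_of_deriv_nonpos (convex_Icc _ _)
      · intro s _
        exact (hφqd s).continuousAt.continuousWithinAt
      · intro s _
        exact (hφqd s).differentiableAt.differentiableWithinAt
      · intro s hs
        rw [(hφqd s).deriv]
        rw [interior_Icc] at hs
        have hb : |deriv W s - deriv W β| ≤ Lr * |s - β| := hLip s β
        have h4 : deriv W β = -κ := by linarith
        rw [h4] at hb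
        have h5 : |s - β| = β - s := by rw [abs_of_neg (by linarith [hs.2])]; ring
        rw [h5] at hb
        have := (abs_le.1 hb).1
        nlinarith [hs.2]
    have := hmono (Set.left_mem_Icc.2 ht) (Set.right_mem_Icc.2 ht) ht
    have hφqβ : φq β = 0 := by simp [hφq, hVβ]
    rw [hφqβ] at this
    simp only [hφq] at this
    linarith
  -- quadrature setup
  set sL : ℝ := Real.sqrt Lr with hsL
  have hsLpos : 0 < sL := Real.sqrt_pos.2 (by linarith)
  have hsL1 : 1 ≤ sL := by
    rw [hsL, show (1:ℝ) = Real.sqrt 1 by simp]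
    exact Real.sqrt_le_sqrt (by linarith)
  have hsLsq : sL^2 = Lr := Real.sq_sqrt (by linarith)
  set a₁ : ℝ := m - σ with ha₁
  have ha₁1 : m - 2*σ < a₁ := by rw [ha₁]; linarith
  have ha₁β : a₁ < β := by rw [ha₁]; linarith
  set f₀ : ℝ → ℝ := fun s => (Real.sqrt (2*(V s - vmin)))⁻¹ with hf₀
  have hsqrtpos : ∀ s, m - 2*σ ≤ s → s < β → 0 < Real.sqrt (2*(V s - vmin)) := by
    intro s h1 h2
    have := hVgt s h1 h2
    exact Real.sqrt_pos.2 (by linarith)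
  have hf₀pos : ∀ s, m - 2*σ ≤ s → s < β → 0 < f₀ s := by
    intro s h1 h2
    exact inv_pos.2 (hsqrtpos s h1 h2)
  have hf₀contAt : ∀ s, m - 2*σ < s → s < β → ContinuousAt f₀ s := by
    intro s h1 h2
    have hC : ContinuousAt (fun z => Real.sqrt (2*(V z - vmin))) s :=
      (Real.continuous_sqrt.comp (continuous_const.mul (hVc.sub continuous_const))).continuousAt
    exact hC.inv₀ (hsqrtpos s h1.le h2).ne'
  set Oin : Set ℝ := Set.Ioo (m - 2*σ) β with hOin
  have hOopen : IsOpen Oin := isOpen_Ioo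
  have hf₀contOn : ContinuousOn f₀ Oin :=
    fun s hs => (hf₀contAt s hs.1 hs.2).continuousWithinAt
  have hsub : ∀ t t', a₁ ≤ t → t ≤ t' → t' < β → Set.Icc t t' ⊆ Oin := by
    intro t t' h1 h2 h3 s hs
    exact ⟨lt_of_lt_of_le ha₁1 (le_trans h1 hs.1), lt_of_le_of_lt hs.2 h3⟩
  have hint : ∀ t t', a₁ ≤ t → t ≤ t' → t' < β →
      IntervalIntegrable f₀ MeasureTheory.volume t t' := by
    intro t t' h1 h2 h3
    apply ContinuousOn.intervalIntegrable
    rw [Set.uIcc_of_le h2]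
    exact hf₀contOn.mono (hsub t t' h1 h2 h3)
  set G : ℝ → ℝ := fun t => ∫ s in a₁..t, f₀ s with hG
  have hGd : ∀ t, a₁ ≤ t → t < β → HasDerivAt G (f₀ t) t := by
    intro t h1 h2
    exact intervalIntegral.integral_hasDerivAt_right (hint a₁ t le_rfl h1 h2)
      (ContinuousOn.stronglyMeasurableAtFilter hOopen hf₀contOn t
        ⟨lt_of_lt_of_le ha₁1 h1, h2⟩)
      (hf₀contAt t (lt_of_lt_of_le ha₁1 h1) h2)
  have hG0 : G a₁ = 0 := intervalIntegral.integral_same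
  have hGmono : ∀ t t', a₁ ≤ t → t < t' → t' < β → G t < G t' := by
    intro t t' h1 h2 h3
    have hi1 : IntervalIntegrable f₀ MeasureTheory.volume a₁ t :=
      hint a₁ t le_rfl h1 (lt_trans h2 h3)
    have hi2 : IntervalIntegrable f₀ MeasureTheory.volume t t' :=
      hint t t' h1 h2.le h3
    have hadd := intervalIntegral.integral_add_adjacent_intervals hi1 hi2
    have hpos : 0 < ∫ s in t..t', f₀ s := by
      apply intervalIntegral.intervalIntegral_pos_of_pos_on hi2
      · intro s hs
        exact hf₀pos s (by linarith [hs.1, ha₁1.le]) (lt_trans hs.2 h3)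
      · exact h2
    have h5 : G t + (∫ s in t..t', f₀ s) = G t' := hadd
    linarith
  have hGnonneg : ∀ t, a₁ ≤ t → t < β → 0 ≤ G t := by
    intro t h1 h2
    rcases eq_or_lt_of_le h1 with h | h
    · rw [← h, hG0]
    · exact le_of_lt (hG0 ▸ hGmono a₁ t le_rfl h h2)
  -- divergence of G near β
  have hGbig : ∀ Y : ℝ, ∃ t, a₁ ≤ t ∧ t < β ∧ Y < G t := by
    intro Y
    set c : ℝ := (β - a₁) * Real.exp (-(sL * (|Y| + 1))) with hc
    have hcpos : 0 < c := mul_pos (by linarith) (Real.exp_pos _)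
    have hcle : c ≤ β - a₁ := by
      rw [hc]
      nlinarith [Real.exp_le_one_iff.2 (show -(sL * (|Y| + 1)) ≤ 0 by nlinarith [abs_nonneg Y]),
        Real.exp_pos (-(sL * (|Y| + 1)))]
    set t : ℝ := β - c with ht
    have hta : a₁ ≤ t := by rw [ht]; linarith
    have htβ : t < β := by rw [ht]; linarith
    refine ⟨t, hta, htβ, ?_⟩
    -- lower bound the integral
    set j : ℝ → ℝ := fun s => -(Real.log (β - s))/sL with hj
    have hjd : ∀ s ∈ Set.uIcc a₁ t, HasDerivAt j ((sL * (β - s))⁻¹) s := by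
      intro s hs
      rw [Set.uIcc_of_le hta] at hs
      have hsβ : s < β := lt_of_le_of_lt hs.2 htβ
      have h1 : HasDerivAt (fun z : ℝ => β - z) (-1) s := by
        simpa using (hasDerivAt_id s).const_sub β
      have h2 : HasDerivAt (fun z : ℝ => Real.log (β - z)) ((β - s)⁻¹ * (-1)) s :=
        (Real.hasDerivAt_log (by linarith)).comp s h1
      have h3 := (h2.neg).div_const sL
      have e : (sL * (β - s))⁻¹ = -((β - s)⁻¹ * (-1)) / sL := by rw [mul_inv]; ring
      rw [e]; exact h3
    have hjint : IntervalIntegrable (fun s => (sL * (β - s))⁻¹) MeasureTheory.volume a₁ t := by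
      apply ContinuousOn.intervalIntegrable
      rw [Set.uIcc_of_le hta]
      intro s hs
      have hsβ : s < β := lt_of_le_of_lt hs.2 htβ
      apply ContinuousWithinAt.inv₀
      · exact (continuous_const.mul (continuous_const.sub continuous_id)).continuousWithinAt
      · exact (mul_pos hsLpos (by linarith)).ne'
    have hFTC : ∫ s in a₁..t, (sL * (β - s))⁻¹ = j t - j a₁ :=
      intervalIntegral.integral_eq_sub_of_hasDerivAt hjd hjint
    have hcomp : ∫ s in a₁..t, (sL * (β - s))⁻¹ ≤ G t := by
      apply intervalIntegral.integral_mono_on hta hjint (hint a₁ t le_rfl hta htβ)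
      intro s hs
      have hsβ : s < β := lt_of_le_of_lt hs.2 htβ
      have hs1 : m - 2*σ ≤ s := by linarith [hs.1, ha₁1.le]
      rw [hf₀]
      simp only
      apply inv_anti₀ (hsqrtpos s hs1 hsβ)
      have hq := hquad s hsβ.le
      calc Real.sqrt (2*(V s - vmin)) ≤ Real.sqrt ((sL*(β - s))^2) := by
            apply Real.sqrt_le_sqrt
            have h7 : (sL*(β - s))^2 = Lr / 2 * (s - β)^2 * 2 := by
              rw [mul_pow, hsLsq]; ring
            rw [h7]; linarith [hq]
        _ = sL*(β - s) := Real.sqrt_sq (mul_nonneg hsLpos.le (by linarith))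
    have hβt : β - t = c := by rw [ht]; ring
    have hlogc : Real.log c = Real.log (β - a₁) + (-(sL * (|Y| + 1))) := by
      rw [hc, Real.log_mul (by linarith : β - a₁ ≠ 0) (Real.exp_ne_zero _), Real.log_exp]
    have hjval : j t - j a₁ = |Y| + 1 := by
      have e1 : j t = -(Real.log (β - a₁) + (-(sL * (|Y| + 1))))/sL := by
        rw [hj]; simp only; rw [hβt, hlogc]
      have e2 : j a₁ = -(Real.log (β - a₁))/sL := rfl
      rw [e1, e2]
      field_simp
      ring
    have : Y ≤ |Y| := le_abs_self Y
    linarith [hcomp, hFTC.symm.le, hFTC]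
  -- surjectivity of G onto [0, ∞)
  have hGcont : ∀ t₂, a₁ ≤ t₂ → t₂ < β → ContinuousOn G (Set.Icc a₁ t₂) := by
    intro t₂ h1 h2 s hs
    exact (hGd s hs.1 (lt_of_le_of_lt hs.2 h2)).continuousAt.continuousWithinAt
  have hsurj : ∀ Y : ℝ, 0 ≤ Y → ∃ t, a₁ ≤ t ∧ t < β ∧ G t = Y := by
    intro Y hY
    obtain ⟨t₂, h1, h2, h3⟩ := hGbig Y
    have hmem : Y ∈ Set.Icc (G a₁) (G t₂) := by rw [hG0]; exact ⟨hY, h3.le⟩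
    obtain ⟨t, ht, hGt⟩ := intermediate_value_Icc h1 (hGcont t₂ h1 h2) hmem
    exact ⟨t, ht.1, lt_of_le_of_lt ht.2 h2, hGt⟩
  have hGle : ∀ t t', a₁ ≤ t → t ≤ t' → t' < β → G t ≤ G t' := by
    intro t t' h1 h2 h3
    rcases eq_or_lt_of_le h2 with h | h
    · rw [h]
    · exact (hGmono t t' h1 h h3).le
  have hGinj : ∀ t t', a₁ ≤ t → t < β → a₁ ≤ t' → t' < β → G t = G t' → t = t' := by
    intro t t' h1 h2 h3 h4 h5
    rcases lt_trichotomy t t' with h | h | h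
    · exact absurd h5 (ne_of_lt (hGmono t t' h1 h h4))
    · exact h
    · exact absurd h5.symm (ne_of_lt (hGmono t' t h3 h h2))
  -- the inverse function
  set ψr : ℝ → ℝ := fun y => if hy : 0 ≤ y then (hsurj y hy).choose else a₁ with hψrdef
  have hψrmem : ∀ y, 0 ≤ y → (a₁ ≤ ψr y ∧ ψr y < β ∧ G (ψr y) = y) := by
    intro y hy
    have h := (hsurj y hy).choose_spec
    rw [hψrdef]; simp only [dif_pos hy]
    exact ⟨h.1, h.2.1, h.2.2⟩
  have hψr0 : ψr 0 = a₁ := by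
    have h := hψrmem 0 le_rfl
    exact hGinj _ _ h.1 h.2.1 le_rfl ha₁β (by rw [h.2.2, hG0])
  have hψrval : ∀ y t, 0 ≤ y → a₁ ≤ t → t < β → G t = y → ψr y = t := by
    intro y t hy h1 h2 h3
    have h := hψrmem y hy
    exact hGinj _ _ h.1 h.2.1 h1 h2 (by rw [h.2.2, h3])
  have hψrmono : ∀ y y', 0 ≤ y → y < y' → ψr y < ψr y' := by
    intro y y' hy hyy
    have h := hψrmem y hy
    have h' := hψrmem y' (by linarith)
    rcases lt_trichotomy (ψr y) (ψr y') with hh | hh | hh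
    · exact hh
    · exfalso; rw [← h.2.2, ← h'.2.2, hh] at hyy; exact lt_irrefl _ hyy
    · exfalso
      have := hGmono _ _ h'.1 hh h.2.1
      rw [h.2.2, h'.2.2] at this; linarith
  have hψrgt : ∀ y, 0 < y → a₁ < ψr y := by
    intro y hy
    have := hψrmono 0 y le_rfl hy
    rwa [hψr0] at this
  -- continuity of ψr on positives
  have hψrcont : ∀ y, 0 < y → ContinuousAt ψr y := by
    intro y hy
    rw [Metric.continuousAt_iff]
    intro ε hε
    obtain ⟨g1, g2, g3⟩ := hψrmem y hy.le
    have hta : a₁ < ψr y := hψrgt y hy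
    set t := ψr y with htdef
    set ε₂ : ℝ := min (min (ε/2) ((β - t)/2)) ((t - a₁)/2) with hε₂
    have hε₂pos : 0 < ε₂ := lt_min (lt_min (by linarith) (by linarith)) (by linarith)
    have hε₂1 : ε₂ ≤ ε/2 := le_trans (min_le_left _ _) (min_le_left _ _)
    have hε₂2 : ε₂ ≤ (β - t)/2 := le_trans (min_le_left _ _) (min_le_right _ _)
    have hε₂3 : ε₂ ≤ (t - a₁)/2 := min_le_right _ _
    have hlo : a₁ ≤ t - ε₂ := by linarith
    have hhi : t + ε₂ < β := by linarith
    have hG1 : G (t - ε₂) < y := by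
      rw [← g3]; exact hGmono _ _ hlo (by linarith) (by linarith)
    have hG2 : y < G (t + ε₂) := by
      rw [← g3]; exact hGmono _ _ g1 (by linarith) hhi
    refine ⟨min (y - G (t - ε₂)) (G (t + ε₂) - y), lt_min (by linarith) (by linarith), ?_⟩
    intro y' hy'
    rw [Real.dist_eq] at hy'
    have habs := abs_lt.1 hy'
    have hm1 := min_le_left (y - G (t - ε₂)) (G (t + ε₂) - y)
    have hm2 := min_le_right (y - G (t - ε₂)) (G (t + ε₂) - y)
    have hy'1 : G (t - ε₂) < y' := by linarith [habs.1]
    have hy'2 : y' < G (t + ε₂) := by linarith [habs.2]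
    have hy'0 : 0 ≤ y' := le_trans (hGnonneg _ hlo (by linarith)) hy'1.le
    obtain ⟨k1, k2, k3⟩ := hψrmem y' hy'0
    rw [Real.dist_eq, abs_lt]
    constructor
    · by_contra hcon
      push_neg at hcon
      have h8 : ψr y' ≤ t - ε₂ := by linarith
      have := hGle _ _ k1 h8 (by linarith)
      rw [k3] at this; linarith
    · by_contra hcon
      push_neg at hcon
      have h8 : t + ε₂ ≤ ψr y' := by linarith
      have := hGle _ _ (by linarith : a₁ ≤ t + ε₂) h8 k2
      rw [k3] at this; linarith
  -- right-continuity of ψr at 0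
  have hψrcont0 : ∀ ε, 0 < ε → ∃ δ, 0 < δ ∧ ∀ y', 0 ≤ y' → y' < δ → ψr y' - a₁ < ε := by
    intro ε hε
    set t2 : ℝ := min (a₁ + ε/2) ((a₁ + β)/2) with ht2
    have h1 : a₁ < t2 := lt_min (by linarith) (by linarith)
    have h2 : t2 < β := lt_of_le_of_lt (min_le_right _ _) (by linarith)
    refine ⟨G t2, by rw [← hG0]; exact hGmono _ _ le_rfl h1 h2, ?_⟩
    intro y' h3 h4
    obtain ⟨k1, k2, k3⟩ := hψrmem y' h3
    have h5 : ψr y' < t2 := by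
      by_contra hcon
      push_neg at hcon
      have := hGle _ _ h1.le hcon k2
      rw [k3] at this; linarith
    have h6 := min_le_left (a₁ + ε/2) ((a₁ + β)/2)
    linarith
  -- the full front
  set ψ : ℝ → ℝ := fun x => if x < 0 then ψr (-x) else a₁ - x with hψdef
  have hψneg : ∀ x, x < 0 → ψ x = ψr (-x) := fun x hx => by rw [hψdef]; simp [hx]
  have hψposx : ∀ x, 0 ≤ x → ψ x = a₁ - x := fun x hx => by
    rw [hψdef]; simp [not_lt.2 hx]
  have hψ0 : ψ 0 = a₁ := by rw [hψposx 0 le_rfl]; ring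
  have hψlt : ∀ x, ψ x < β := by
    intro x
    by_cases hx : x < 0
    · rw [hψneg x hx]; exact (hψrmem (-x) (by linarith)).2.1
    · push_neg at hx; rw [hψposx x hx]; linarith
  have hψanti : StrictAnti ψ := by
    intro x x' hxx
    show ψ x' < ψ x
    by_cases hx : x < 0
    · rw [hψneg x hx]
      by_cases hx' : x' < 0
      · rw [hψneg x' hx']
        exact hψrmono (-x') (-x) (by linarith) (by linarith)
      · push_neg at hx'
        rw [hψposx x' hx']
        have h5 : a₁ < ψr (-x) := hψrgt (-x) (by linarith)
        linarith
    · push_neg at hx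
      rw [hψposx x hx, hψposx x' (by linarith)]
      linarith
  -- continuity of ψ
  have hψcont : Continuous ψ := by
    rw [continuous_iff_continuousAt]
    intro x
    rcases lt_trichotomy x 0 with hx | hx | hx
    · have hev : ψ =ᶠ[𝓝 x] fun z => ψr (-z) := by
        filter_upwards [Iio_mem_nhds hx] with z hz
        exact hψneg z hz
      rw [continuousAt_congr hev]
      exact (hψrcont (-x) (by linarith)).comp continuous_neg.continuousAt
    · subst hx
      rw [continuousAt_iff_continuous_left_right]
      constructor
      · rw [Metric.continuousWithinAt_iff]
        intro ε hε
        obtain ⟨δ, hδpos, hδ⟩ := hψrcont0 ε hε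
        refine ⟨δ, hδpos, ?_⟩
        intro z hz hdist
        rw [Real.dist_eq, sub_zero] at hdist
        rw [Real.dist_eq, hψ0]
        rcases eq_or_lt_of_le (mem_Iic.1 hz) with h | h
        · rw [h, hψ0]; simpa using hε
        · rw [hψneg z h]
          have h6 : 0 ≤ -z := by linarith
          have h7 : -z < δ := by
            have := abs_lt.1 hdist
            linarith [this.1]
          have h8 := hδ (-z) h6 h7
          have h9 : a₁ ≤ ψr (-z) := (hψrmem (-z) h6).1
          rw [abs_of_nonneg (by linarith)]
          linarith
      · have hc : ContinuousWithinAt (fun z : ℝ => a₁ - z) (Set.Ici 0) 0 :=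
          (continuous_const.sub continuous_id).continuousWithinAt
        apply hc.congr
        · intro z hz; exact hψposx z hz
        · rw [hψ0]; ring
    · have hev : ψ =ᶠ[𝓝 x] fun z => a₁ - z := by
        filter_upwards [Ioi_mem_nhds hx] with z hz
        exact hψposx z (le_of_lt hz)
      rw [continuousAt_congr hev]
      exact (continuous_const.sub continuous_id).continuousAt
  -- derivative of ψ on negatives
  set Dψ : ℝ → ℝ := fun x => -Real.sqrt (2*(V (ψ x) - vmin)) with hDψdef
  have hψmemrange : ∀ x, x < 0 → a₁ < ψ x ∧ ψ x < β := by
    intro x hx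
    rw [hψneg x hx]
    exact ⟨hψrgt (-x) (by linarith), (hψrmem (-x) (by linarith)).2.1⟩
  have hψd : ∀ x, x < 0 → HasDerivAt ψ (Dψ x) x := by
    intro x hx
    have hy : 0 < -x := by linarith
    obtain ⟨k1, k2, k3⟩ := hψrmem (-x) hy.le
    have hGd' : HasDerivAt G (f₀ (ψr (-x))) (ψr (-x)) := hGd _ k1 k2
    have hfg : ∀ᶠ y' in 𝓝 (-x), G (ψr y') = y' := by
      filter_upwards [Ioi_mem_nhds hy] with y' hy'
      exact (hψrmem y' (le_of_lt hy')).2.2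
    have hne : f₀ (ψr (-x)) ≠ 0 := (hf₀pos _ (by linarith [ha₁1.le]) k2).ne'
    have hinv : HasDerivAt ψr ((f₀ (ψr (-x)))⁻¹) (-x) :=
      HasDerivAt.of_local_left_inverse (hψrcont (-x) hy) hGd' hne hfg
    have hinv2 : HasDerivAt (fun z : ℝ => ψr (-z)) ((f₀ (ψr (-x)))⁻¹ * (-1)) x :=
      hinv.comp x (hasDerivAt_neg x)
    have hev : ψ =ᶠ[𝓝 x] fun z => ψr (-z) := by
      filter_upwards [Iio_mem_nhds hx] with z hz
      exact hψneg z hz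
    have hfinal := hinv2.congr_of_eventuallyEq hev
    have hval : (f₀ (ψr (-x)))⁻¹ * (-1) = Dψ x := by
      rw [hDψdef]; simp only
      rw [hf₀]; simp only
      rw [inv_inv, hψneg x hx]
      ring
    rwa [hval] at hfinal
  -- second derivative of ψ on negatives
  have hψd2 : ∀ x, x < 0 → HasDerivAt Dψ (deriv W (ψ x) + κ) x := by
    intro x hx
    obtain ⟨hm1, hm2⟩ := hψmemrange x hx
    have hVpos : 0 < 2*(V (ψ x) - vmin) := by
      have := hVgt (ψ x) (by linarith [ha₁1.le]) hm2
      linarith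
    have hSpos : 0 < Real.sqrt (2*(V (ψ x) - vmin)) := Real.sqrt_pos.2 hVpos
    have hVψ : HasDerivAt (fun z => V (ψ z)) ((deriv W (ψ x) + κ) * Dψ x) x :=
      (hVder (ψ x)).comp x (hψd x hx)
    have hinner : HasDerivAt (fun z => 2*(V (ψ z) - vmin))
        (2*((deriv W (ψ x) + κ) * Dψ x)) x := by
      exact (hVψ.sub_const vmin).const_mul 2
    have hsq : HasDerivAt (fun z => Real.sqrt (2*(V (ψ z) - vmin)))
        (1/(2*Real.sqrt (2*(V (ψ x) - vmin))) * (2*((deriv W (ψ x) + κ) * Dψ x))) x :=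
      (Real.hasDerivAt_sqrt hVpos.ne').comp x hinner
    have hfinal := hsq.neg
    have hval : -(1/(2*Real.sqrt (2*(V (ψ x) - vmin))) * (2*((deriv W (ψ x) + κ) * Dψ x)))
        = deriv W (ψ x) + κ := by
      have hD : Dψ x = -Real.sqrt (2*(V (ψ x) - vmin)) := rfl
      set S := Real.sqrt (2*(V (ψ x) - vmin)) with hSdef
      rw [hD]
      have h9 : -(1/(2*S) * (2*((deriv W (ψ x) + κ) * -S)))
          = (deriv W (ψ x) + κ) * S / S := by ring
      rw [h9, mul_div_cancel_right₀ _ hSpos.ne']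
    rw [hval] at hfinal
    exact hfinal
  -- Lipschitz bound on ψ on negatives
  obtain ⟨Mv, hMvK, hMvmax⟩ := isCompact_Icc.exists_isMaxOn hKne hVc.continuousOn
  set P : ℝ := Real.sqrt (2*(V Mv - vmin)) + 1 with hPdef
  have hPpos : 0 < P := by
    have := Real.sqrt_nonneg (2*(V Mv - vmin))
    linarith
  have hDbound : ∀ x, x < 0 → |Dψ x| ≤ P := by
    intro x hx
    obtain ⟨hm1, hm2⟩ := hψmemrange x hx
    have h1 : V (ψ x) ≤ V Mv := hMvmax ⟨by linarith [ha₁1.le], by linarith⟩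
    have h2 := Real.sqrt_le_sqrt (show 2*(V (ψ x) - vmin) ≤ 2*(V Mv - vmin) by linarith)
    have hD : Dψ x = -Real.sqrt (2*(V (ψ x) - vmin)) := rfl
    rw [hD, abs_neg, abs_of_nonneg (Real.sqrt_nonneg _)]
    linarith
  have hψlip : ∀ x x', x < x' → x' < 0 → |ψ x - ψ x'| ≤ P * (x' - x) := by
    intro x x' h1 h2
    obtain ⟨ξ, hξ, hslope⟩ := exists_hasDerivAt_eq_slope ψ Dψ h1
      (fun z hz => (hψcont.continuousAt).continuousWithinAt)
      (fun z hz => hψd z (lt_trans hz.2 h2))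
    have h3 : ψ x' - ψ x = Dψ ξ * (x' - x) := by
      have hne : x' - x ≠ 0 := ne_of_gt (by linarith)
      rw [hslope, div_mul_cancel₀ _ hne]
    have h4 := hDbound ξ (lt_trans hξ.2 h2)
    rw [abs_sub_comm, h3, abs_mul, abs_of_pos (by linarith : (0:ℝ) < x' - x)]
    exact mul_le_mul_of_nonneg_right h4 (by linarith)
  -- landmark points
  have hGmpos : 0 < G m := by
    rw [← hG0]; exact hGmono a₁ m le_rfl (by rw [ha₁]; linarith) hβm
  have hψGm : ψ (-(G m)) = m := by
    rw [hψneg _ (by linarith), neg_neg]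
    exact hψrval (G m) m hGmpos.le (by rw [ha₁]; linarith) hβm rfl
  have hmθ : a₁ < (m + β)/2 := by rw [ha₁]; linarith
  have hθβ : (m + β)/2 < β := by linarith
  have hyθpos : 0 < G ((m + β)/2) := by
    rw [← hG0]; exact hGmono a₁ _ le_rfl hmθ hθβ
  have hψyθ : ψ (-(G ((m + β)/2))) = (m + β)/2 := by
    rw [hψneg _ (by linarith), neg_neg]
    exact hψrval _ _ hyθpos.le hmθ.le hθβ rfl
  exact ⟨β, κ, σ, P, G m, G ((m + β)/2), ψ, Dψ, hκpos, hσpos, hβm, hβμ, hPpos, hGmpos,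
    hyθpos, hψlt, by rw [hψ0, ha₁], hψanti, hψcont, hψd, hψd2, hψlip, hψGm, hψyθ⟩

end Stmt18Helpers

open Stmt18Helpers in
set_option maxHeartbeats 2000000 in
theorem stmt18 (n : ℕ) (hn : 0 < n) (W : ℝ → ℝ) (μm μ : ℝ) (hμ : μm < μ)
    -- `W ∈ C^{1,1}(ℝ)`: `W` is `C¹` with Lipschitz derivative
    (hW1 : ContDiff ℝ 1 W) (hWlip : ∃ L : NNReal, LipschitzWith L (deriv W))
    (hWnn : ∀ t : ℝ, 0 ≤ W t) (hWμ : W μ = 0)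
    (hWpos : ∀ t ∈ Set.Ioo μm μ, 0 < W t)
    (u : EuclideanSpace ℝ (Fin n) → ℝ) (hu : ContDiff ℝ 2 u)
    (heq : ∀ x, lap u x = deriv W (u x))
    (hbd : ∀ x, μm ≤ u x ∧ u x ≤ μ)
    -- `u(x₁, x') → μ` uniformly in `x'` as `x₁ → ±∞`
    (hlim : ∀ δ > (0:ℝ), ∃ M : ℝ,
      ∀ x : EuclideanSpace ℝ (Fin n), M < |x (⟨0, hn⟩ : Fin n)| → |u x - μ| < δ) :
    ∀ x, u x = μ := by
  classical
  set i₀ : Fin n := ⟨0, hn⟩ with hi₀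
  have hbb : BddBelow (Set.range u) := ⟨μm, by rintro _ ⟨x, rfl⟩; exact (hbd x).1⟩
  have hrne : (Set.range u).Nonempty := ⟨u 0, 0, rfl⟩
  set m : ℝ := sInf (Set.range u) with hm
  have hm_le : ∀ x, m ≤ u x := fun x => csInf_le hbb ⟨x, rfl⟩
  have hmLEμ : m ≤ μ := le_trans (hm_le 0) (hbd 0).2
  suffices hmain : μ ≤ m by
    intro x
    exact le_antisymm (hbd x).2 (le_trans hmain (hm_le x))
  by_contra hcon
  push_neg at hcon
  obtain ⟨L₀, hL₀⟩ := hWlip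
  set Lnn : NNReal := L₀ ⊔ 1 with hLnn
  have hLW : LipschitzWith Lnn (deriv W) := hL₀.weaken le_sup_left
  set Lr : ℝ := (Lnn : ℝ) with hLrdef
  have hLr : 1 ≤ Lr := by
    rw [hLrdef, hLnn]
    exact_mod_cast (le_sup_right : (1:NNReal) ≤ L₀ ⊔ 1)
  have hLrpos : 0 < Lr := lt_of_lt_of_le one_pos hLr
  have hLip : ∀ a b : ℝ, |deriv W a - deriv W b| ≤ Lr * |a - b| := by
    intro a b
    have := hLW.dist_le_mul a b
    rwa [Real.dist_eq, Real.dist_eq] at this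
  have hWd : Differentiable ℝ W := hW1.differentiable one_ne_zero
  have hucont : Continuous u := hu.continuous
  have hn1 : (1:ℝ) ≤ (n:ℝ) := by exact_mod_cast hn
  have hexist : ∀ θ, m < θ → ∃ x, u x < θ := by
    intro θ hθ
    obtain ⟨_, ⟨x, rfl⟩, hlt⟩ := exists_lt_of_csInf_lt hrne hθ
    exact ⟨x, hlt⟩
  rcases (hWnn m).eq_or_lt with hWm | hWm
  · -- Case A : W m = 0 (degenerate bottom)
    have hWmmin : IsLocalMin W m := Filter.Eventually.of_forall fun y => by
      rw [← hWm]; exact hWnn y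
    have hW'm : deriv W m = 0 := hWmmin.deriv_eq_zero
    have hWub : ∀ t, m ≤ t → deriv W t ≤ Lr * (t - m) := by
      intro t ht
      have h1 := hLip t m
      rw [hW'm, sub_zero, abs_of_nonneg (by linarith : (0:ℝ) ≤ t - m)] at h1
      linarith [le_abs_self (deriv W t)]
    set δ : ℝ := (μ - m)/2 with hδdef
    have hδpos : 0 < δ := by rw [hδdef]; linarith
    obtain ⟨M₀, hM₀⟩ := hlim δ hδpos
    set M' : ℝ := max M₀ 0 + 1 with hM'def
    have hM'pos : 0 < M' := by
      rw [hM'def]; have := le_max_right M₀ 0; linarith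
    have hout : ∀ x : EuclideanSpace ℝ (Fin n), M' ≤ |x i₀| → m + δ ≤ u x := by
      intro x hx
      have h1 : M₀ < |x i₀| := by
        have := le_max_left M₀ 0
        rw [hM'def] at hx; linarith
      have h2 := abs_lt.1 (hM₀ x h1)
      have : μ - δ = m + δ := by rw [hδdef]; ring
      linarith [h2.1]
    set α : ℝ := Real.sqrt Lr with hαdef
    have hαsq : α^2 = Lr := Real.sq_sqrt hLrpos.le
    have hαpos : 0 < α := Real.sqrt_pos.2 hLrpos
    have hαα : α * α = Lr := by nlinarith [hαsq]
    set c₁ : ℝ := δ / Real.cosh (α * M') with hc₁def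
    have hc₁pos : 0 < c₁ := div_pos hδpos (Real.cosh_pos _)
    set clamp : ℝ → ℝ := fun y => max (-M') (min M' y) with hclampdef
    have hclampcont : Continuous clamp :=
      continuous_const.max (continuous_const.min continuous_id)
    set φ : ℝ → ℝ := fun y => m + c₁ * Real.cosh (α * clamp y) with hφdef
    have hφcont : Continuous φ :=
      continuous_const.add (continuous_const.mul
        (Real.continuous_cosh.comp (continuous_const.mul hclampcont)))
    have hc₁M' : c₁ * Real.cosh (α * M') = δ := by
      rw [hc₁def]; field_simp
    have hφle : ∀ y, φ y ≤ m + δ := by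
      intro y
      have h1 : |clamp y| ≤ M' := by
        rw [hclampdef, abs_le]; simp only
        constructor
        · exact le_max_left _ _
        · exact max_le (by linarith) (min_le_left _ _)
      have h2 : Real.cosh (α * clamp y) ≤ Real.cosh (α * M') := by
        rw [Real.cosh_le_cosh, abs_mul, abs_mul, abs_of_pos hαpos,
          abs_of_pos hM'pos]
        exact mul_le_mul_of_nonneg_left h1 hαpos.le
      rw [hφdef]; simp only
      nlinarith [hc₁pos, hc₁M']
    have hφeq : ∀ y, |y| < M' → φ y = m + c₁ * Real.cosh (α * y) := by
      intro y hy
      have h1 := abs_lt.1 hy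
      rw [hφdef, hclampdef]; simp only
      rw [min_eq_right h1.2.le, max_eq_right h1.1.le]
    set Dφ : ℝ → ℝ := fun y => c₁ * (Real.sinh (α * y) * α) with hDφdef
    have hφd : ∀ y ∈ Set.Ioo (-M') M', HasDerivAt φ (Dφ y) y := by
      intro y hy
      have hev : φ =ᶠ[𝓝 y] fun z => m + c₁ * Real.cosh (α * z) := by
        filter_upwards [isOpen_Ioo.mem_nhds hy] with z hz
        exact hφeq z (abs_lt.2 ⟨hz.1, hz.2⟩)
      have hexp : HasDerivAt (fun z : ℝ => m + c₁ * Real.cosh (α * z))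
          (c₁ * (Real.sinh (α * y) * α)) y := by
        have h1 : HasDerivAt (fun z : ℝ => α * z) α y := by
          simpa using (hasDerivAt_id y).const_mul α
        have h2 := (Real.hasDerivAt_cosh (α * y)).comp y h1
        exact (h2.const_mul c₁).const_add m
      exact hexp.congr_of_eventuallyEq hev
    have hclaim : ∀ x : EuclideanSpace ℝ (Fin n), φ (x i₀) ≤ u x := by
      by_contra hcon2
      push_neg at hcon2
      obtain ⟨xb, hxb⟩ := hcon2
      set d : ℝ := u xb - φ (xb i₀) with hddef
      have hdneg : d < 0 := by rw [hddef]; linarith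
      have hkey : ∀ ε : ℝ, 0 < ε → -d * Lr ≤ 2*n*ε := by
        intro ε hε
        set F : EuclideanSpace ℝ (Fin n) → ℝ :=
          fun x => u x - φ (x i₀) + ε * (∑ i, (x i - xb i)^2) with hFdef
        have hFcont : Continuous F := by
          apply (hucont.sub (hφcont.comp (continuous_coord i₀))).add
          apply continuous_const.mul
          apply continuous_finset_sum
          intro i _
          exact ((continuous_coord i).sub continuous_const).pow 2
        have hFlb : ∀ x, -δ + ε * (∑ i, (x i - xb i)^2) ≤ F x := by
          intro x
          have h1 := hm_le x
          have h2 := hφle (x i₀)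
          rw [hFdef]; simp only
          have : -δ ≤ u x - φ (x i₀) := by linarith
          linarith
        have hFxb : F xb = d := by
          rw [hFdef, hddef]; simp
        have hcoer : ∀ x, Real.sqrt ((δ + |F xb| + 1)/ε) < dist x xb → F xb ≤ F x := by
          intro x hx
          have h1 : (δ + |F xb| + 1)/ε < dist x xb ^ 2 := by
            have h2 : 0 ≤ (δ + |F xb| + 1)/ε := by positivity
            calc (δ + |F xb| + 1)/ε = Real.sqrt ((δ + |F xb| + 1)/ε) ^ 2 :=
                  (Real.sq_sqrt h2).symm
              _ < dist x xb ^ 2 := by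
                  have h3 : 0 ≤ Real.sqrt ((δ + |F xb| + 1)/ε) := Real.sqrt_nonneg _
                  nlinarith [hx]
          have h4 : δ + |F xb| + 1 < ε * dist x xb ^ 2 := by
            rw [div_lt_iff₀ hε] at h1; linarith [h1]
          have h5 := hFlb x
          rw [penalty_eq_dist_sq] at h5
          have h6 : F xb ≤ |F xb| := le_abs_self _
          linarith
        obtain ⟨q, hq⟩ := exists_min_of_radius hFcont xb
          (Real.sqrt ((δ + |F xb| + 1)/ε)) hcoer
        have hFq : F q ≤ d := by rw [← hFxb]; exact hq xb
        have hpenq : 0 ≤ ε * (∑ i, (q i - xb i)^2) := by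
          apply mul_nonneg hε.le
          exact Finset.sum_nonneg fun i _ => sq_nonneg _
        have huqφ : u q - φ (q i₀) ≤ d := by
          have : F q = u q - φ (q i₀) + ε * (∑ i, (q i - xb i)^2) := rfl
          linarith
        have hqin : |q i₀| < M' := by
          by_contra hq2
          push_neg at hq2
          have h5 := hout q hq2
          have h6 := hφle (q i₀)
          linarith
        have hqmem : q i₀ ∈ Set.Ioo (-M') M' := by
          have := abs_lt.1 hqin; exact ⟨this.1, this.2⟩
        have hφ2 : HasDerivAt Dφ (c₁ * ((Real.cosh (α * q i₀) * α) * α)) (q i₀) := by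
          have h1 : HasDerivAt (fun z : ℝ => α * z) α (q i₀) := by
            simpa using (hasDerivAt_id (q i₀)).const_mul α
          have h2 := (Real.hasDerivAt_sinh (α * q i₀)).comp (q i₀) h1
          have h3 := (h2.mul_const α).const_mul c₁
          exact h3
        have hker := kernel hu i₀ isOpen_Ioo hφd hqmem hφ2 hq
        have h6 : lap u q = deriv W (u q) := heq q
        have h7 : deriv W (u q) ≤ Lr * (u q - m) := hWub (u q) (hm_le q)
        have h8 : c₁ * ((Real.cosh (α * q i₀) * α) * α) = Lr * (φ (q i₀) - m) := by
          rw [hφeq _ hqin, ← hαα]; ring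
        rw [h6, h8] at hker
        have h9 : Lr * (u q - φ (q i₀)) ≤ Lr * d :=
          mul_le_mul_of_nonneg_left huqφ hLrpos.le
        nlinarith [hker, h7, h9]
      set ε : ℝ := Lr*(-d)/(8*n) with hεdef
      have hεpos : 0 < ε := by
        rw [hεdef]
        apply div_pos (by nlinarith) (by nlinarith)
      have hfin := hkey ε hεpos
      rw [hεdef] at hfin
      have h10 : 2*(n:ℝ)*(Lr*(-d)/(8*n)) = Lr*(-d)/4 := by
        field_simp
        ring
      rw [h10] at hfin
      nlinarith
    have hallx : ∀ x : EuclideanSpace ℝ (Fin n), m + c₁ ≤ u x := by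
      intro x
      have h1 := hclaim x
      have h2 := Real.one_le_cosh (α * clamp (x i₀))
      have h3 : m + c₁ * 1 ≤ φ (x i₀) := by
        rw [hφdef]; simp only
        nlinarith [hc₁pos]
      linarith
    have hfinal := le_csInf hrne (by rintro _ ⟨x, rfl⟩; exact hallx x)
    rw [← hm] at hfinal
    linarith
  · -- Case B : W m > 0
    obtain ⟨β, κ, σ, P, Gm, yθ, ψ, Dψ, hκpos, hσpos, hβm, hβμ, hPpos, hGmpos, hyθpos,
      hψlt, hψ0, hψanti, hψcont, hψd, hψd2, hψlip, hψGm, hψyθ⟩ :=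
      front_exists hWd hLr hLip hWnn hcon hWμ hWm
    set δh : ℝ := (μ - β)/2 with hδhdef
    have hδhpos : 0 < δh := by rw [hδhdef]; linarith
    obtain ⟨M₀, hM₀⟩ := hlim δh hδhpos
    set M : ℝ := max M₀ 0 with hMdef
    have hMnn : 0 ≤ M := le_max_right _ _
    have hout : ∀ x, M < |x i₀| → β < u x := by
      intro x hx
      have h1 := abs_lt.1 (hM₀ x (lt_of_le_of_lt (le_max_left M₀ 0) hx))
      have h2 : μ - δh = (μ + β)/2 := by rw [hδhdef]; ring
      nlinarith [h1.1]
    set Pp : ℝ → Prop := fun s => ∀ x : EuclideanSpace ℝ (Fin n), ψ (x i₀ - s) ≤ u x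
      with hPpdef
    have hψm_of_arg : ∀ z, -Gm ≤ z → ψ z ≤ m := by
      intro z hz
      rcases eq_or_lt_of_le hz with h | h
      · rw [← h, hψGm]
      · rw [← hψGm]
        exact (hψanti h).le
    have hray : ∀ s s', s' ≤ s → Pp s → Pp s' := by
      intro s s' hss hPs x
      have h1 : x i₀ - s ≤ x i₀ - s' := by linarith
      exact le_trans (hψanti.antitone h1) (hPs x)
    have hne : Pp (-(M+1)) := by
      intro x
      by_cases hcase : ψ (x i₀ - (-(M+1))) ≤ m
      · exact le_trans hcase (hm_le x)
      · push_neg at hcase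
        have h1 : x i₀ - (-(M+1)) < -Gm := by
          by_contra hc2
          push_neg at hc2
          exact absurd (hψm_of_arg _ hc2) (not_le.2 hcase)
        have h2 : M < |x i₀| := by
          have h3 : x i₀ < -(M+1) := by linarith [hGmpos]
          rw [lt_abs]; right; linarith
        exact le_trans (hψlt _).le (hout x h2).le
    set SS : Set ℝ := {s | Pp s} with hSSdef
    have hSSne : SS.Nonempty := ⟨-(M+1), hne⟩
    by_cases hbdd : BddAbove SS
    · set sstar : ℝ := sSup SS with hsstardef
      have hall_lt : ∀ s, s < sstar → Pp s := by
        intro s hs2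
        obtain ⟨s'', hs''mem, hs''⟩ := exists_lt_of_lt_csSup hSSne hs2
        exact hray s'' s hs''.le hs''mem
      have hPsstar : Pp sstar := by
        intro x
        have htends : Filter.Tendsto (fun s => ψ (x i₀ - s)) (𝓝[<] sstar)
            (𝓝 (ψ (x i₀ - sstar))) := by
          apply Filter.Tendsto.mono_left ?_ nhdsWithin_le_nhds
          exact (hψcont.continuousAt.comp
            ((continuous_const.sub continuous_id).continuousAt))
        apply le_of_tendsto htends
        filter_upwards [self_mem_nhdsWithin] with s hs3
        exact hall_lt s hs3 x
      have hkey : ∀ d', 0 < d' → d' < Gm → P * d' < σ → κ ≤ (Lr*P + 2*n)*d' := by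
        intro d' hd'pos hd'Gm hd'σ
        have hnot : ¬ Pp (sstar + d') := by
          intro hmem
          have : sstar + d' ≤ sstar := le_csSup hbdd hmem
          linarith
        have hnot2 : ∃ x : EuclideanSpace ℝ (Fin n), u x < ψ (x i₀ - (sstar + d')) := by
          by_contra hc
          push_neg at hc
          exact hnot (fun x => hc x)
        obtain ⟨xt, hxt⟩ := hnot2
        set A1 : ℝ := xt i₀ - (sstar + d') with hA1
        set A2 : ℝ := xt i₀ - sstar with hA2
        have hA21 : A2 = A1 + d' := by rw [hA1, hA2]; ring
        have hvalm : m < ψ A1 := lt_of_le_of_lt (hm_le xt) hxt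
        have hA1neg : A1 < -Gm := by
          by_contra hc2
          push_neg at hc2
          exact absurd (hψm_of_arg _ hc2) (not_le.2 hvalm)
        have hA2neg : A2 < 0 := by rw [hA21]; linarith [hGmpos]
        have hlip12 : |ψ A1 - ψ A2| ≤ P * d' := by
          have h0 := hψlip A1 A2 (by rw [hA21]; linarith) hA2neg
          rwa [show A2 - A1 = d' by rw [hA21]; ring] at h0
        set F : EuclideanSpace ℝ (Fin n) → ℝ :=
          fun x => u x - ψ (x i₀ - sstar) + d' * (∑ i, (x i - xt i)^2) with hFdef
        have hFcont : Continuous F := by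
          apply (hucont.sub (hψcont.comp ((continuous_coord i₀).sub continuous_const))).add
          apply continuous_const.mul
          apply continuous_finset_sum
          intro i _
          exact ((continuous_coord i).sub continuous_const).pow 2
        have hFnn : ∀ x, 0 ≤ u x - ψ (x i₀ - sstar) := by
          intro x; linarith [hPsstar x]
        have hFxt : F xt < P * d' := by
          have he : F xt = u xt - ψ A2 + d' * (∑ i, (xt i - xt i)^2) := rfl
          rw [he, show (∑ i : Fin n, (xt i - xt i)^2) = 0 by simp]
          have h1 : u xt - ψ A2 < ψ A1 - ψ A2 := by linarith [hxt]
          have h2 : ψ A1 - ψ A2 ≤ P * d' := le_trans (le_abs_self _) hlip12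
          linarith
        have hcoer : ∀ x, Real.sqrt P < dist x xt → F xt ≤ F x := by
          intro x hx
          have h5 : P < dist x xt ^ 2 := by
            have h3 : 0 ≤ Real.sqrt P := Real.sqrt_nonneg _
            nlinarith [Real.sq_sqrt hPpos.le, hx]
          have h6 := hFnn x
          have he : F x = u x - ψ (x i₀ - sstar) + d' * (∑ i, (x i - xt i)^2) := rfl
          rw [penalty_eq_dist_sq] at he
          nlinarith [hFxt, hd'pos]
        obtain ⟨q, hq⟩ := exists_min_of_radius hFcont xt (Real.sqrt P) hcoer
        have hFq : F q < P * d' := lt_of_le_of_lt (hq xt) hFxt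
        have hpenq : 0 ≤ d' * (∑ i, (q i - xt i)^2) := by
          apply mul_nonneg hd'pos.le
          exact Finset.sum_nonneg fun i _ => sq_nonneg _
        have hqgap : u q - ψ (q i₀ - sstar) < P * d' := by
          have he : F q = u q - ψ (q i₀ - sstar) + d' * (∑ i, (q i - xt i)^2) := rfl
          linarith
        have hqneg : q i₀ - sstar < 0 := by
          by_contra hc2
          push_neg at hc2
          have h1 := hψanti.antitone hc2
          rw [hψ0] at h1
          linarith [hm_le q, hqgap]
        set φB : ℝ → ℝ := fun y => ψ (y - sstar) with hφBdef
        set DφB : ℝ → ℝ := fun y => Dψ (y - sstar) with hDφBdef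
        have hφBd : ∀ y ∈ Set.Iio sstar, HasDerivAt φB (DφB y) y := by
          intro y hy
          have h1 : HasDerivAt (fun z : ℝ => z - sstar) 1 y := (hasDerivAt_id y).sub_const sstar
          have h2 := (hψd (y - sstar) (sub_neg.mpr hy)).comp y h1
          simpa [Function.comp_def] using h2
        have hφB2 : HasDerivAt DφB (deriv W (ψ (q i₀ - sstar)) + κ) (q i₀) := by
          have h1 : HasDerivAt (fun z : ℝ => z - sstar) 1 (q i₀) :=
            (hasDerivAt_id _).sub_const sstar
          have h2 := (hψd2 (q i₀ - sstar) hqneg).comp (q i₀) h1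
          simpa [Function.comp_def] using h2
        have hqmem : q i₀ ∈ Set.Iio sstar := by
          rw [Set.mem_Iio]; linarith [hqneg]
        have hker := kernel hu i₀ isOpen_Iio hφBd hqmem hφB2 hq
        have h6 : lap u q = deriv W (u q) := heq q
        rw [h6] at hker
        have h7 : |deriv W (u q) - deriv W (ψ (q i₀ - sstar))|
            ≤ Lr * (u q - ψ (q i₀ - sstar)) := by
          have h0 := hLip (u q) (ψ (q i₀ - sstar))
          rwa [abs_of_nonneg (hFnn q)] at h0
        have h8 := (abs_le.1 h7).2
        have h9 : Lr * (u q - ψ (q i₀ - sstar)) ≤ Lr * (P * d') :=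
          mul_le_mul_of_nonneg_left hqgap.le hLrpos.le
        nlinarith [hker]
      set dd : ℝ := min (min (Gm/2) (σ/(2*P))) (κ/(2*(Lr*P + 2*n + 1))) with hdddef
      have hden : (0:ℝ) < Lr*P + 2*n + 1 := by positivity
      have hd1 : 0 < dd := by
        apply lt_min (lt_min (by linarith [hGmpos]) (by positivity)) (by positivity)
      have hd2 : dd < Gm := by
        have h0 : dd ≤ Gm/2 := (min_le_left _ _).trans (min_le_left _ _)
        linarith [hGmpos]
      have hd3 : P * dd < σ := by
        have h1 : dd ≤ σ/(2*P) := (min_le_left _ _).trans (min_le_right _ _)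
        have h2 : P * dd ≤ P * (σ/(2*P)) := mul_le_mul_of_nonneg_left h1 hPpos.le
        have h3 : P * (σ/(2*P)) = σ/2 := by field_simp
        nlinarith [hσpos]
      have hd4 : dd ≤ κ/(2*(Lr*P + 2*n + 1)) := min_le_right _ _
      have h5 := hkey dd hd1 hd2 hd3
      have h7 : (Lr*P + 2*(n:ℝ))*dd ≤ (Lr*P + 2*n)*(κ/(2*(Lr*P + 2*n + 1))) :=
        mul_le_mul_of_nonneg_left hd4 (by positivity)
      have h8 : (Lr*P + 2*(n:ℝ))*(κ/(2*(Lr*P + 2*n + 1))) < κ/2 := by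
        rw [mul_div_assoc']
        rw [div_lt_div_iff₀ (by positivity) (by norm_num : (0:ℝ) < 2)]
        nlinarith [hκpos]
      linarith
    · have hallPp : ∀ s, Pp s := by
        intro s
        obtain ⟨s'', hs''mem, hs''⟩ := not_bddAbove_iff.1 hbdd s
        exact hray s'' s hs''.le hs''mem
      obtain ⟨xh, hxh⟩ := hexist ((m + β)/2) (by linarith)
      have hfin := hallPp (xh i₀ + yθ) xh
      rw [show xh i₀ - (xh i₀ + yθ) = -yθ by ring, hψyθ] at hfin
      linarith
end
end
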